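/- arXiv:1702.06976 — 5 statements merged into one kernel-verified Lean document; each statement's English description precedes it below -/
import Mathlib

section
/- Let X be a random vector in ℝⁿ with finite first moment, i.e. E|⟨u,X⟩| < ∞ for every u ∈ ℝⁿ. Let K = { E[λ(X)·X] : λ : ℝⁿ → ℝ measurable with −1 ≤ λ ≤ 1 }. Then K is a nonempty, closed, bounded convex subset of ℝⁿ, and its support function satisfies sup_{y ∈ K} ⟨y,θ⟩ = E|⟨X,θ⟩| for every θ ∈ ℝⁿ. Consequently K equals the centroid body ΓX. -/
open MeasureTheory ProbabilityTheory Filter Topology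
open scoped RealInnerProductSpace ENNReal

noncomputable def msign (v : ℝ) : ℝ := if v < 0 then -1 else if 0 < v then 1 else 0

lemma measurable_msign : Measurable msign := by
  unfold msign
  exact Measurable.ite (measurableSet_lt measurable_id measurable_const) measurable_const
    (Measurable.ite (measurableSet_lt measurable_const measurable_id) measurable_const
      measurable_const)

lemma msign_mem (v : ℝ) : msign v ∈ Set.Icc (-1:ℝ) 1 := by
  unfold msign
  rcases lt_trichotomy v 0 with h|h|h
  · rw [if_pos h]; norm_num
  · rw [if_neg (by simp [h]), if_neg (by simp [h])]; norm_num
  · rw [if_neg (by linarith), if_pos h]; norm_num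

lemma msign_mul (v : ℝ) : msign v * v = |v| := by
  unfold msign
  rcases lt_trichotomy v 0 with h|h|h
  · rw [if_pos h, abs_of_neg h]; ring
  · simp [h]
  · rw [if_neg (by linarith), if_pos h, abs_of_pos h]; ring
section Aux
variable {α : Type*} [MeasurableSpace α] {μ : Measure α}

lemma integrable_bdd_mul {h f : α → ℝ} (hh : Measurable h) (hb : ∀ x, |h x| ≤ 1)
    (hf : Integrable f μ) : Integrable (fun x => h x * f x) μ := by
  refine hf.abs.mono' ((hh.aemeasurable.mul hf.aemeasurable).aestronglyMeasurable) ?_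
  filter_upwards with x
  rw [Real.norm_eq_abs, abs_mul]
  exact mul_le_of_le_one_left (abs_nonneg _) (hb x)

lemma abs_integral_mul_sub_le {h f₁ f₂ : α → ℝ} (hh : Measurable h) (hb : ∀ x, |h x| ≤ 1)
    (hf₁ : Integrable f₁ μ) (hf₂ : Integrable f₂ μ) :
    |(∫ x, h x * f₁ x ∂μ) - ∫ x, h x * f₂ x ∂μ| ≤ ∫ x, |f₁ x - f₂ x| ∂μ := by
  rw [← integral_sub (integrable_bdd_mul hh hb hf₁) (integrable_bdd_mul hh hb hf₂)]
  have h1 : (fun x => h x * f₁ x - h x * f₂ x) = fun x => h x * (f₁ x - f₂ x) := by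
    funext x; ring
  rw [h1]
  calc |∫ x, h x * (f₁ x - f₂ x) ∂μ| ≤ ∫ x, |h x| * |f₁ x - f₂ x| ∂μ := by
        simpa [Real.norm_eq_abs, abs_mul] using
          norm_integral_le_integral_norm (μ := μ) (fun x => h x * (f₁ x - f₂ x))
    _ ≤ ∫ x, |f₁ x - f₂ x| ∂μ := by
        refine integral_mono
          ((integrable_bdd_mul hh hb (hf₁.sub hf₂)).abs.congr
            (Filter.Eventually.of_forall fun x => abs_mul _ _)) (hf₁.sub hf₂).abs ?_
        intro x
        dsimp only
        exact mul_le_of_le_one_left (abs_nonneg _) (hb x)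

lemma abs_integral_mul_le {h f : α → ℝ} (hh : Measurable h) (hb : ∀ x, |h x| ≤ 1)
    (hf : Integrable f μ) : |∫ x, h x * f x ∂μ| ≤ ∫ x, |f x| ∂μ := by
  simpa using abs_integral_mul_sub_le hh hb hf (integrable_zero _ _ μ)

end Aux

lemma exists_subseq_density_limit {α : Type*} [MeasurableSpace α]
    [MeasurableSpace.CountablyGenerated α] (μ : Measure α) [IsFiniteMeasure μ]
    (g : ℕ → α → ℝ) (hg : ∀ k, Measurable (g k)) (hgb : ∀ k x, g k x ∈ Set.Icc (0:ℝ) 1) :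
    ∃ φ : ℕ → ℕ, StrictMono φ ∧ ∃ G : α → ℝ, Measurable G ∧ (∀ x, G x ∈ Set.Icc (0:ℝ) 1) ∧
      ∀ f : α → ℝ, Integrable f μ →
        Tendsto (fun k => ∫ x, g (φ k) x * f x ∂μ) atTop (𝓝 (∫ x, G x * f x ∂μ)) := by
  classical
  have hgb1 : ∀ k x, |g k x| ≤ 1 := fun k x => abs_le.2 ⟨by linarith [(hgb k x).1], (hgb k x).2⟩
  haveI : Fact ((1:ℝ≥0∞) ≠ ∞) := ⟨by simp⟩
  haveI : SecondCountableTopology (Lp ℝ 1 μ) := MeasureTheory.Lp.SecondCountableTopology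
  haveI : Nonempty (Lp ℝ 1 μ) := ⟨0⟩
  set e : ℕ → Lp ℝ 1 μ := TopologicalSpace.denseSeq (Lp ℝ 1 μ) with he_def
  have he : DenseRange e := TopologicalSpace.denseRange_denseSeq _
  set a : ℕ → ℕ → ℝ := fun k m => ∫ x, g k x * (e m : α → ℝ) x ∂μ with ha_def
  have hmem : ∀ k, a k ∈ Set.univ.pi fun m =>
      Set.Icc (-(∫ x, |(e m : α → ℝ) x| ∂μ)) (∫ x, |(e m : α → ℝ) x| ∂μ) := by
    intro k
    rw [Set.mem_univ_pi]
    intro m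
    exact Set.mem_Icc.2 (abs_le.1 (abs_integral_mul_le (hg k) (hgb1 k)
      (L1.integrable_coeFn (e m))))
  obtain ⟨L, -, φ, hφ, hL⟩ := (isCompact_univ_pi fun m => isCompact_Icc).tendsto_subseq hmem
  have hLm : ∀ m, Tendsto (fun k => a (φ k) m) atTop (𝓝 (L m)) := fun m =>
    tendsto_pi_nhds.1 hL m
  have hdist : ∀ (f : α → ℝ) (hf : Integrable f μ) (m : ℕ),
      ∫ x, |f x - (e m : α → ℝ) x| ∂μ = dist (hf.toL1 f) (e m) := by
    intro f hf m
    rw [L1.dist_eq_integral_dist]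
    refine integral_congr_ae ?_
    filter_upwards [hf.coeFn_toL1, Lp.coeFn_sub (hf.toL1 f) (e m)] with x hx _
    rw [Real.dist_eq, hx]
  have hC : ∀ (f : α → ℝ), Integrable f μ → CauchySeq fun k => ∫ x, g (φ k) x * f x ∂μ := by
    intro f hf
    rw [Metric.cauchySeq_iff]
    intro ε hε
    obtain ⟨m, hm⟩ := he.exists_dist_lt (hf.toL1 f) (show 0 < ε/3 by linarith)
    obtain ⟨N, hN⟩ := Metric.cauchySeq_iff.1 (hLm m).cauchySeq (ε/3) (by linarith)
    refine ⟨N, fun j hj k hk => ?_⟩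
    have h1 : ∀ i, |(∫ x, g (φ i) x * f x ∂μ) - a (φ i) m| ≤ ε/3 := by
      intro i
      refine (abs_integral_mul_sub_le (hg (φ i)) (hgb1 (φ i)) hf
        (L1.integrable_coeFn (e m))).trans ?_
      rw [hdist f hf m]
      exact hm.le
    have h2 : |a (φ j) m - a (φ k) m| < ε/3 := by
      have := hN j hj k hk
      rwa [Real.dist_eq] at this
    rw [Real.dist_eq]
    have t1 := abs_sub_le (∫ x, g (φ j) x * f x ∂μ) (a (φ j) m) (∫ x, g (φ k) x * f x ∂μ)
    have t2 := abs_sub_le (a (φ j) m) (a (φ k) m) (∫ x, g (φ k) x * f x ∂μ)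
    have h3 := h1 j
    have h4 := h1 k
    rw [abs_sub_comm] at h4
    linarith
  -- limits along indicators
  set J : ℕ → (α → ℝ) → ℝ := fun k f => ∫ x, g (φ k) x * f x ∂μ with hJ_def
  have h_ind_int : ∀ {t : Set α}, MeasurableSet t →
      Integrable (t.indicator fun _ => (1:ℝ)) μ := fun ht => (integrable_const 1).indicator ht
  set b : Set α → ℝ := fun t => limUnder atTop fun k => J k (t.indicator fun _ => (1:ℝ))
    with hb_def
  have hbt : ∀ {t : Set α}, MeasurableSet t →
      Tendsto (fun k => J k (t.indicator fun _ => (1:ℝ))) atTop (𝓝 (b t)) :=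
    fun ht => (hC _ (h_ind_int ht)).tendsto_limUnder
  have hind_mul : ∀ (h : α → ℝ) (t : Set α) (x : α),
      h x * t.indicator (fun _ => (1:ℝ)) x = t.indicator h x := by
    intro h t x
    by_cases hx : x ∈ t <;> simp [hx]
  have hb_nonneg : ∀ {t : Set α}, MeasurableSet t → 0 ≤ b t := by
    intro t ht
    refine ge_of_tendsto (hbt ht) (Eventually.of_forall fun k => ?_)
    exact integral_nonneg fun x => mul_nonneg (hgb _ x).1
      (Set.indicator_nonneg (fun _ _ => zero_le_one) x)
  have hb_le : ∀ {t : Set α}, MeasurableSet t → b t ≤ (μ t).toReal := by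
    intro t ht
    refine le_of_tendsto (hbt ht) (Eventually.of_forall fun k => ?_)
    have h1 : J k (t.indicator fun _ => (1:ℝ)) ≤ ∫ x, t.indicator (fun _ => (1:ℝ)) x ∂μ := by
      refine integral_mono (integrable_bdd_mul (hg _) (hgb1 _) (h_ind_int ht))
        (h_ind_int ht) fun x => ?_
      dsimp only
      by_cases hx : x ∈ t <;> simp [hx, (hgb (φ k) x).2]
    refine h1.trans ?_
    rw [integral_indicator ht]
    simp
    exact le_rfl
  have hb_union : ∀ {t u : Set α}, MeasurableSet t → MeasurableSet u → Disjoint t u →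
      b (t ∪ u) = b t + b u := by
    intro t u ht hu hd
    refine tendsto_nhds_unique (hbt (ht.union hu)) ?_
    refine Tendsto.congr (fun k => ?_) ((hbt ht).add (hbt hu))
    rw [hJ_def]
    dsimp only
    rw [← integral_add (integrable_bdd_mul (hg _) (hgb1 _) (h_ind_int ht))
      (integrable_bdd_mul (hg _) (hgb1 _) (h_ind_int hu))]
    refine integral_congr_ae (Eventually.of_forall fun x => ?_)
    dsimp only
    have h9 := congrFun (Set.indicator_union_of_disjoint hd (fun _ => (1:ℝ))) x
    rw [h9]
    ring
  have hb_empty : b ∅ = 0 := by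
    refine tendsto_nhds_unique (hbt MeasurableSet.empty) ?_
    refine Tendsto.congr (fun k => ?_) (tendsto_const_nhds (x := (0:ℝ)))
    simp [hJ_def]
  -- countable additivity
  have hmU : ∀ ⦃s : ℕ → Set α⦄, (∀ i, MeasurableSet (s i)) → Pairwise (Function.onFun Disjoint s) →
      ENNReal.ofReal (b (⋃ i, s i)) = ∑' i, ENNReal.ofReal (b (s i)) := by
    intro s hs hd
    set tail : ℕ → Set α := fun m => ⋃ i, s (i + m) with htail_def
    have htm : ∀ m, MeasurableSet (tail m) := fun m => MeasurableSet.iUnion fun i => hs _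
    have htail_succ : ∀ m, tail m = s m ∪ tail (m + 1) := by
      intro m
      ext x
      simp only [htail_def, Set.mem_iUnion, Set.mem_union]
      constructor
      · rintro ⟨i, hi⟩
        rcases i with _ | j
        · exact Or.inl (by simpa using hi)
        · refine Or.inr ⟨j, ?_⟩
          have hidx : j + (m + 1) = j + 1 + m := by omega
          rw [hidx]
          exact hi
      · rintro (hx | ⟨j, hj⟩)
        · exact ⟨0, by simpa using hx⟩
        · refine ⟨j + 1, ?_⟩
          have hidx : j + 1 + m = j + (m + 1) := by omega
          rw [hidx]
          exact hj
    have hdisj_tail : ∀ m, Disjoint (s m) (tail (m+1)) := by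
      intro m
      exact Set.disjoint_iUnion_right.2 fun i => hd (by omega)
    have hdecomp : ∀ m, b (⋃ i, s i) = (∑ i ∈ Finset.range m, b (s i)) + b (tail m) := by
      intro m
      induction m with
      | zero =>
        simp [htail_def]
      | succ m ih =>
        rw [Finset.sum_range_succ, ih]
        have : b (tail m) = b (s m) + b (tail (m+1)) := by
          rw [htail_succ m]
          exact hb_union (hs m) (htm (m+1)) (hdisj_tail m)
        rw [this]
        ring
    have hμtail : Tendsto (fun m => μ (tail m)) atTop (𝓝 0) := by
      have h1 : ∀ m, μ (tail m) = ∑' i, μ (s (i + m)) := by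
        intro m
        exact measure_iUnion (fun i j hij => hd (show i + m ≠ j + m by omega)) fun i => hs _
      rw [funext h1]
      exact ENNReal.tendsto_sum_nat_add _
        (by rw [← measure_iUnion hd hs]; exact measure_ne_top μ _)
    have hbtail0 : Tendsto (fun m => b (tail m)) atTop (𝓝 0) := by
      have hto : Tendsto (fun m => (μ (tail m)).toReal) atTop (𝓝 0) := by
        have := (ENNReal.tendsto_toReal (a := 0) (by simp)).comp hμtail
        simpa [Function.comp_def] using this
      exact squeeze_zero (fun m => hb_nonneg (htm m)) (fun m => hb_le (htm m)) hto
    have hpartial : Tendsto (fun m => ∑ i ∈ Finset.range m, b (s i)) atTop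
        (𝓝 (b (⋃ i, s i))) := by
      have heq : ∀ m, ∑ i ∈ Finset.range m, b (s i) = b (⋃ i, s i) - b (tail m) := by
        intro m
        have := hdecomp m
        linarith
      rw [funext heq]
      simpa using tendsto_const_nhds.sub hbtail0
    have hsummable : Summable fun i => b (s i) :=
      summable_of_sum_range_le (fun i => hb_nonneg (hs i))
        (fun m => by have := hdecomp m; have := hb_nonneg (htm m); linarith)
    have hsum_eq : b (⋃ i, s i) = ∑' i, b (s i) :=
      tendsto_nhds_unique hpartial hsummable.hasSum.tendsto_sum_nat
    rw [hsum_eq, ENNReal.ofReal_tsum_of_nonneg (fun i => hb_nonneg (hs i)) hsummable]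
  set M : Measure α := Measure.ofMeasurable (fun t _ => ENNReal.ofReal (b t))
      (by simp [hb_empty]) (fun s hs hd => hmU hs hd) with hM_def
  have hM : ∀ {t : Set α}, MeasurableSet t → M t = ENNReal.ofReal (b t) :=
    fun ht => Measure.ofMeasurable_apply _ ht
  have hMle : M ≤ μ := by
    refine Measure.le_iff.2 fun t ht => ?_
    rw [hM ht]
    calc ENNReal.ofReal (b t) ≤ ENNReal.ofReal (μ t).toReal :=
          ENNReal.ofReal_le_ofReal (hb_le ht)
      _ = μ t := ENNReal.ofReal_toReal (measure_ne_top μ t)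
  haveI : IsFiniteMeasure M :=
    ⟨lt_of_le_of_lt (Measure.le_iff'.1 hMle Set.univ) (measure_lt_top μ _)⟩
  have hac : M ≪ μ := hMle.absolutelyContinuous
  set G₀ : α → ℝ≥0∞ := M.rnDeriv μ with hG₀_def
  have hG₀meas : Measurable G₀ := Measure.measurable_rnDeriv M μ
  have hG₀int : ∀ {t : Set α}, MeasurableSet t → ∫⁻ x in t, G₀ x ∂μ = M t := by
    intro t ht
    conv_rhs => rw [← Measure.withDensity_rnDeriv_eq M μ hac]
    rw [withDensity_apply _ ht]
  have hG₀le : G₀ ≤ᵐ[μ] 1 := Measure.rnDeriv_le_one_of_le hMle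
  have hG₀lt : ∀ᵐ x ∂μ, G₀ x < ∞ := Measure.rnDeriv_lt_top M μ
  set G : α → ℝ := fun x => min (G₀ x).toReal 1 with hG_def
  have hGmeas : Measurable G := hG₀meas.ennreal_toReal.min measurable_const
  have hGmem : ∀ x, G x ∈ Set.Icc (0:ℝ) 1 := fun x =>
    ⟨le_min ENNReal.toReal_nonneg zero_le_one, min_le_right _ _⟩
  have hGae : G =ᵐ[μ] fun x => (G₀ x).toReal := by
    filter_upwards [hG₀le] with x hx
    have h1 : (G₀ x).toReal ≤ 1 := by
      simpa using ENNReal.toReal_mono (by simp) hx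
    simp [hG_def, min_eq_left h1]
  have hGb1 : ∀ x, |G x| ≤ 1 := fun x => abs_le.2 ⟨by linarith [(hGmem x).1], (hGmem x).2⟩
  have hGint : ∀ {t : Set α}, MeasurableSet t →
      ∫ x, G x * t.indicator (fun _ => (1:ℝ)) x ∂μ = b t := by
    intro t ht
    have e1 : ∫ x, G x * t.indicator (fun _ => (1:ℝ)) x ∂μ = ∫ x in t, G x ∂μ := by
      rw [show (fun x => G x * t.indicator (fun _ => (1:ℝ)) x) = t.indicator G from
        funext fun x => hind_mul G t x]
      exact integral_indicator ht
    rw [e1, integral_congr_ae (ae_restrict_of_ae hGae),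
      integral_toReal (hG₀meas.aemeasurable.restrict) (ae_restrict_of_ae hG₀lt),
      hG₀int ht, hM ht, ENNReal.toReal_ofReal (hb_nonneg ht)]
  refine ⟨φ, hφ, G, hGmeas, hGmem, ?_⟩
  intro f hf
  refine Integrable.induction (μ := μ)
    (P := fun f => Tendsto (fun k => ∫ x, g (φ k) x * f x ∂μ) atTop
      (𝓝 (∫ x, G x * f x ∂μ))) ?_ ?_ ?_ ?_ hf
  · -- indicators
    intro c t ht _
    have hcongr : ∀ (h : α → ℝ),
        (fun x => h x * t.indicator (fun _ => c) x)
          = fun x => c * (h x * t.indicator (fun _ => (1:ℝ)) x) := by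
      intro h
      funext x
      by_cases hx : x ∈ t <;> simp [hx] <;> ring
    have h2 : ∫ x, G x * t.indicator (fun _ => c) x ∂μ = c * b t := by
      rw [hcongr G, integral_const_mul, hGint ht]
    rw [show (fun k => ∫ x, g (φ k) x * t.indicator (fun _ => c) x ∂μ)
        = fun k => c * J k (t.indicator fun _ => (1:ℝ)) from
       funext fun k => by rw [hcongr (g (φ k))]; exact integral_const_mul c _, h2]
    exact (hbt ht).const_mul c
  · -- addition
    intro f₁ f₂ _ hf₁ hf₂ h₁ h₂
    have key : ∀ (h : α → ℝ), Measurable h → (∀ x, |h x| ≤ 1) →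
        ∫ x, h x * (f₁ + f₂) x ∂μ = (∫ x, h x * f₁ x ∂μ) + ∫ x, h x * f₂ x ∂μ := by
      intro h hm hb
      rw [← integral_add (integrable_bdd_mul hm hb hf₁) (integrable_bdd_mul hm hb hf₂)]
      refine integral_congr_ae (Eventually.of_forall fun x => ?_)
      simp only [Pi.add_apply]
      ring
    rw [key G hGmeas hGb1]
    exact Tendsto.congr (fun k => (key (g (φ k)) (hg _) (hgb1 _)).symm) (h₁.add h₂)
  · -- closedness in L¹
    refine IsSeqClosed.isClosed ?_
    intro Fs F hFs hF
    show Tendsto (fun k => ∫ x, g (φ k) x * (F : α → ℝ) x ∂μ) atTop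
      (𝓝 (∫ x, G x * (F : α → ℝ) x ∂μ))
    rw [Metric.tendsto_atTop]
    intro ε hε
    obtain ⟨N₀, hN₀⟩ := Metric.tendsto_atTop.1 hF (ε/3) (by linarith)
    set j := N₀ with hj_def
    have hj : dist (Fs j) F < ε/3 := hN₀ j le_rfl
    have hj' : ∫ x, |(Fs j : α → ℝ) x - (F : α → ℝ) x| ∂μ < ε/3 := by
      calc ∫ x, |(Fs j : α → ℝ) x - (F : α → ℝ) x| ∂μ = dist (Fs j) F := by
            rw [L1.dist_eq_integral_dist]
            exact integral_congr_ae (Eventually.of_forall fun x => (Real.dist_eq _ _).symm)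
        _ < ε/3 := hj
    obtain ⟨N, hN⟩ := Metric.tendsto_atTop.1 (hFs j) (ε/3) (by linarith)
    refine ⟨N, fun k hk => ?_⟩
    have b1 := abs_integral_mul_sub_le (hg (φ k)) (hgb1 _) (L1.integrable_coeFn F)
      (L1.integrable_coeFn (Fs j))
    have b2 := abs_integral_mul_sub_le hGmeas hGb1 (L1.integrable_coeFn (Fs j))
      (L1.integrable_coeFn F)
    have hsymm : ∫ x, |(F : α → ℝ) x - (Fs j : α → ℝ) x| ∂μ
        = ∫ x, |(Fs j : α → ℝ) x - (F : α → ℝ) x| ∂μ :=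
      integral_congr_ae (Eventually.of_forall fun x => abs_sub_comm _ _)
    have hNk := hN k hk
    rw [Real.dist_eq] at hNk ⊢
    have t1 := abs_sub_le (∫ x, g (φ k) x * (F : α → ℝ) x ∂μ)
      (∫ x, g (φ k) x * (Fs j : α → ℝ) x ∂μ) (∫ x, G x * (F : α → ℝ) x ∂μ)
    have t2 := abs_sub_le (∫ x, g (φ k) x * (Fs j : α → ℝ) x ∂μ)
      (∫ x, G x * (Fs j : α → ℝ) x ∂μ) (∫ x, G x * (F : α → ℝ) x ∂μ)
    rw [hsymm] at b1
    linarith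
  · -- a.e. congruence
    intro f₁ f₂ hae _ h₁
    have e : ∀ (h : α → ℝ), ∫ x, h x * f₁ x ∂μ = ∫ x, h x * f₂ x ∂μ := by
      intro h
      refine integral_congr_ae ?_
      filter_upwards [hae] with x hx
      rw [hx]
    rw [e G] at h₁
    exact Tendsto.congr (fun k => e (g (φ k))) h₁

/-- The centroid body of a distribution `μ` on `ℝⁿ`: the (compact, convex) set whose support
function is `u ↦ E|⟨u,X⟩|`, realized as the intersection of the corresponding halfspaces. -/
noncomputable def centroidBody {n : ℕ} (μ : Measure (EuclideanSpace ℝ (Fin n))) :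
    Set (EuclideanSpace ℝ (Fin n)) :=
  {y | ∀ u : EuclideanSpace ℝ (Fin n), ⟪y, u⟫ ≤ ∫ x, |⟪x, u⟫| ∂μ}

/-- the dual characterization of the centroid body.  The set
`K = { E[λ(X)·X] : λ measurable, -1 ≤ λ ≤ 1 }` is a nonempty closed bounded convex set whose
support function is `θ ↦ E|⟨X,θ⟫|`, and `K` equals the centroid body `ΓX`. -/
theorem centroid_body_dual_characterization
    {n : ℕ} {Ω : Type*} [MeasureSpace Ω] [IsProbabilityMeasure (ℙ : Measure Ω)]
    (X : Ω → EuclideanSpace ℝ (Fin n)) (hX : Measurable X)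
    (hint : ∀ u : EuclideanSpace ℝ (Fin n), Integrable (fun ω => |⟪X ω, u⟫|) ℙ) :
    let K : Set (EuclideanSpace ℝ (Fin n)) :=
      {y | ∃ lam : EuclideanSpace ℝ (Fin n) → ℝ, Measurable lam ∧
        (∀ x, lam x ∈ Set.Icc (-1 : ℝ) 1) ∧ y = ∫ ω, lam (X ω) • X ω}
    K.Nonempty ∧ IsClosed K ∧ Bornology.IsBounded K ∧ Convex ℝ K ∧
      (∀ θ : EuclideanSpace ℝ (Fin n),
        sSup ((fun y => ⟪y, θ⟫) '' K) = ∫ ω, |⟪X ω, θ⟫|) ∧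
      K = centroidBody (Measure.map X ℙ) := by
  classical
  intro K
  have hKmem : ∀ y : EuclideanSpace ℝ (Fin n), y ∈ K ↔
      ∃ lam : EuclideanSpace ℝ (Fin n) → ℝ, Measurable lam ∧
        (∀ x, lam x ∈ Set.Icc (-1 : ℝ) 1) ∧ y = ∫ ω, lam (X ω) • X ω := fun y => Iff.rfl
  -- basic integrability facts
  have hXint : Integrable X ℙ := by
    refine Integrable.mono' (g := fun ω => ∑ i, |⟪X ω, EuclideanSpace.single i (1:ℝ)⟫|)
      (integrable_finset_sum _ fun i _ => hint _) hX.aestronglyMeasurable ?_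
    filter_upwards with ω
    have h1 : X ω = ∑ i, EuclideanSpace.single i (X ω i) := by
      ext j
      rw [WithLp.ofLp_sum, Finset.sum_apply]
      simp [EuclideanSpace.single_apply]
    calc ‖X ω‖ = ‖∑ i, EuclideanSpace.single i (X ω i)‖ := by rw [← h1]
      _ ≤ ∑ i, ‖EuclideanSpace.single i (X ω i)‖ := norm_sum_le _ _
      _ = ∑ i, |⟪X ω, EuclideanSpace.single i (1:ℝ)⟫| := by
          refine Finset.sum_congr rfl fun i _ => ?_
          rw [EuclideanSpace.norm_single, EuclideanSpace.inner_single_right]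
          simp
  have habs1 : ∀ (lam : EuclideanSpace ℝ (Fin n) → ℝ),
      (∀ x, lam x ∈ Set.Icc (-1:ℝ) 1) → ∀ z, |lam z| ≤ 1 :=
    fun lam hb z => abs_le.2 ⟨(hb z).1, (hb z).2⟩
  have hlam_int : ∀ (lam : EuclideanSpace ℝ (Fin n) → ℝ), Measurable lam →
      (∀ x, lam x ∈ Set.Icc (-1:ℝ) 1) → Integrable (fun ω => lam (X ω) • X ω) ℙ := by
    intro lam hm hb
    refine hXint.norm.mono' (((hm.comp hX).smul hX).aestronglyMeasurable) ?_
    filter_upwards with ω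
    rw [norm_smul, Real.norm_eq_abs]
    calc |lam (X ω)| * ‖X ω‖ ≤ 1 * ‖X ω‖ :=
          mul_le_mul_of_nonneg_right (habs1 lam hb _) (norm_nonneg _)
      _ = ‖X ω‖ := one_mul _
  have hinner_meas : ∀ θ : EuclideanSpace ℝ (Fin n),
      Measurable fun x : EuclideanSpace ℝ (Fin n) => ⟪x, θ⟫ := fun θ =>
    (continuous_id.inner continuous_const).measurable
  have hinner_int : ∀ θ, Integrable (fun ω => ⟪X ω, θ⟫) ℙ := by
    intro θ
    refine (hint θ).mono' ((hinner_meas θ).comp hX).aestronglyMeasurable ?_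
    filter_upwards with ω
    rw [Real.norm_eq_abs]
  have hinner_eq : ∀ (lam : EuclideanSpace ℝ (Fin n) → ℝ), Measurable lam →
      (∀ x, lam x ∈ Set.Icc (-1:ℝ) 1) →
      ∀ θ, ⟪∫ ω, lam (X ω) • X ω, θ⟫ = ∫ ω, lam (X ω) * ⟪X ω, θ⟫ := by
    intro lam hm hb θ
    rw [real_inner_comm, ← integral_inner (hlam_int lam hm hb) θ]
    refine integral_congr_ae (Eventually.of_forall fun ω => ?_)
    dsimp only
    rw [real_inner_smul_right, real_inner_comm]
  -- membership of 0
  have h0K : (0 : EuclideanSpace ℝ (Fin n)) ∈ K := by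
    refine (hKmem 0).2 ⟨fun _ => 0, measurable_const, fun x => by norm_num, ?_⟩
    simp
  -- the support-function upper bound
  have hub : ∀ (θ : EuclideanSpace ℝ (Fin n)) y, y ∈ K → ⟪y, θ⟫ ≤ ∫ ω, |⟪X ω, θ⟫| := by
    intro θ y hy
    obtain ⟨lam, hm, hb, rfl⟩ := (hKmem y).1 hy
    rw [hinner_eq lam hm hb θ]
    refine integral_mono (integrable_bdd_mul (hm.comp hX)
      (fun ω => habs1 lam hb _) (hinner_int θ)) (hint θ) fun ω => ?_
    dsimp only
    calc lam (X ω) * ⟪X ω, θ⟫ ≤ |lam (X ω) * ⟪X ω, θ⟫| := le_abs_self _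
      _ = |lam (X ω)| * |⟪X ω, θ⟫| := abs_mul _ _
      _ ≤ 1 * |⟪X ω, θ⟫| := mul_le_mul_of_nonneg_right (habs1 lam hb _) (abs_nonneg _)
      _ = |⟪X ω, θ⟫| := one_mul _
  -- the support function value is attained
  have hsup_mem : ∀ θ : EuclideanSpace ℝ (Fin n), ∃ y ∈ K, ⟪y, θ⟫ = ∫ ω, |⟪X ω, θ⟫| := by
    intro θ
    set lam : EuclideanSpace ℝ (Fin n) → ℝ := fun x => msign ⟪x, θ⟫ with hlam
    have hm : Measurable lam := measurable_msign.comp (hinner_meas θ)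
    have hb : ∀ x, lam x ∈ Set.Icc (-1:ℝ) 1 := fun x => msign_mem _
    refine ⟨∫ ω, lam (X ω) • X ω, (hKmem _).2 ⟨lam, hm, hb, rfl⟩, ?_⟩
    rw [hinner_eq lam hm hb θ]
    exact integral_congr_ae (Eventually.of_forall fun ω => msign_mul _)
  -- support function equality
  have hsup : ∀ θ : EuclideanSpace ℝ (Fin n),
      sSup ((fun y => ⟪y, θ⟫) '' K) = ∫ ω, |⟪X ω, θ⟫| := by
    intro θ
    obtain ⟨y₀, hy₀K, hy₀⟩ := hsup_mem θ
    refine IsGreatest.csSup_eq ⟨⟨y₀, hy₀K, hy₀⟩, ?_⟩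
    rintro z ⟨y, hyK, rfl⟩
    exact hub θ y hyK
  -- convexity
  have hconv : Convex ℝ K := by
    intro y₁ hy₁ y₂ hy₂ p q hp hq hpq
    obtain ⟨l₁, hm₁, hb₁, rfl⟩ := (hKmem y₁).1 hy₁
    obtain ⟨l₂, hm₂, hb₂, rfl⟩ := (hKmem y₂).1 hy₂
    refine (hKmem _).2 ⟨fun x => p * l₁ x + q * l₂ x,
      (hm₁.const_mul p).add (hm₂.const_mul q), ?_, ?_⟩
    · intro x
      have a1 : p * (-1) ≤ p * l₁ x := mul_le_mul_of_nonneg_left (hb₁ x).1 hp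
      have a2 : q * (-1) ≤ q * l₂ x := mul_le_mul_of_nonneg_left (hb₂ x).1 hq
      have a3 : p * l₁ x ≤ p * 1 := mul_le_mul_of_nonneg_left (hb₁ x).2 hp
      have a4 : q * l₂ x ≤ q * 1 := mul_le_mul_of_nonneg_left (hb₂ x).2 hq
      simp only [Set.mem_Icc]
      exact ⟨by linarith, by linarith⟩
    · have e1 : ∀ ω, p • (l₁ (X ω) • X ω) + q • (l₂ (X ω) • X ω)
          = (p * l₁ (X ω) + q * l₂ (X ω)) • X ω := by
        intro ω
        rw [add_smul, mul_smul, mul_smul]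
      have h₁ : Integrable (fun ω => p • (l₁ (X ω) • X ω)) ℙ := (hlam_int l₁ hm₁ hb₁).smul p
      have h₂ : Integrable (fun ω => q • (l₂ (X ω) • X ω)) ℙ := (hlam_int l₂ hm₂ hb₂).smul q
      calc (p • ∫ ω, l₁ (X ω) • X ω) + q • ∫ ω, l₂ (X ω) • X ω
          = ∫ ω, (p • (l₁ (X ω) • X ω) + q • (l₂ (X ω) • X ω)) := by
            rw [← integral_smul, ← integral_smul]
            exact (integral_add h₁ h₂).symm
        _ = ∫ ω, (p * l₁ (X ω) + q * l₂ (X ω)) • X ω :=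
            integral_congr_ae (Eventually.of_forall fun ω => e1 ω)
  -- boundedness
  have hbdd : Bornology.IsBounded K := by
    rw [isBounded_iff_forall_norm_le]
    refine ⟨∫ ω, ‖X ω‖, fun y hy => ?_⟩
    obtain ⟨lam, hm, hb, rfl⟩ := (hKmem y).1 hy
    calc ‖∫ ω, lam (X ω) • X ω‖ ≤ ∫ ω, ‖lam (X ω) • X ω‖ := norm_integral_le_integral_norm _
      _ ≤ ∫ ω, ‖X ω‖ := by
          refine integral_mono (hlam_int lam hm hb).norm hXint.norm fun ω => ?_
          dsimp only
          rw [norm_smul, Real.norm_eq_abs]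
          calc |lam (X ω)| * ‖X ω‖ ≤ 1 * ‖X ω‖ :=
                mul_le_mul_of_nonneg_right (habs1 lam hb _) (norm_nonneg _)
            _ = ‖X ω‖ := one_mul _
  -- change of variables for the centroid body integrals
  have hmap_abs : ∀ u : EuclideanSpace ℝ (Fin n),
      ∫ x, |⟪x, u⟫| ∂(Measure.map X ℙ) = ∫ ω, |⟪X ω, u⟫| := fun u =>
    integral_map hX.aemeasurable ((hinner_meas u).abs).aestronglyMeasurable
  -- closedness via the weak-* compactness lemma
  have hclosed : IsClosed K := by
    refine IsSeqClosed.isClosed ?_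
    intro ys y hys hy
    choose lam hm hb hyeq using fun j => (hKmem (ys j)).1 (hys j)
    set μ := Measure.map X ℙ with hμ_def
    haveI : IsProbabilityMeasure μ := Measure.isProbabilityMeasure_map hX.aemeasurable
    have hmap_inner : ∀ θ : EuclideanSpace ℝ (Fin n),
        Integrable (fun x : EuclideanSpace ℝ (Fin n) => ⟪x, θ⟫) μ := by
      intro θ
      rw [hμ_def, integrable_map_measure (hinner_meas θ).aestronglyMeasurable hX.aemeasurable]
      exact hinner_int θ
    set g : ℕ → EuclideanSpace ℝ (Fin n) → ℝ := fun j x => (lam j x + 1)/2 with hg_def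
    have hgmeas : ∀ j, Measurable (g j) := fun j => ((hm j).add_const 1).div_const 2
    have hgb : ∀ j x, g j x ∈ Set.Icc (0:ℝ) 1 := by
      intro j x
      have h1 := (hb j x).1
      have h2 := (hb j x).2
      constructor
      · simp only [hg_def]; linarith
      · simp only [hg_def]; linarith
    obtain ⟨φ, hφ, G, hGmeas, hGmem, hGlim⟩ := exists_subseq_density_limit μ g hgmeas hgb
    set lam' : EuclideanSpace ℝ (Fin n) → ℝ := fun x => 2 * G x - 1 with hlam'_def
    have hm' : Measurable lam' := (hGmeas.const_mul 2).sub_const 1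
    have hb' : ∀ x, lam' x ∈ Set.Icc (-1:ℝ) 1 := by
      intro x
      constructor
      · simp only [hlam'_def]; linarith [(hGmem x).1]
      · simp only [hlam'_def]; linarith [(hGmem x).2]
    refine (hKmem y).2 ⟨lam', hm', hb', ?_⟩
    refine ext_inner_right ℝ fun θ => ?_
    set fθ : EuclideanSpace ℝ (Fin n) → ℝ := fun x => ⟪x, θ⟫ with hfθ_def
    have hfθint : Integrable fθ μ := hmap_inner θ
    have hchg : ∀ (l : EuclideanSpace ℝ (Fin n) → ℝ), Measurable l →
        (∀ x, l x ∈ Set.Icc (-1:ℝ) 1) →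
        (∫ ω, l (X ω) * ⟪X ω, θ⟫) = ∫ x, l x * fθ x ∂μ := by
      intro l hml hbl
      rw [hμ_def, integral_map (f := fun x => l x * fθ x) hX.aemeasurable
        ((hml.mul (hinner_meas θ)).aestronglyMeasurable)]
    have hsplit : ∀ (l : EuclideanSpace ℝ (Fin n) → ℝ), Measurable l →
        (∀ x, l x ∈ Set.Icc (-1:ℝ) 1) →
        ∫ x, l x * fθ x ∂μ = 2 * (∫ x, ((l x + 1)/2) * fθ x ∂μ) - ∫ x, fθ x ∂μ := by
      intro l hml hbl
      have hbl2 : ∀ x, |(l x + 1)/2| ≤ 1 := by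
        intro x
        rw [abs_le]
        constructor
        · linarith [(hbl x).1]
        · linarith [(hbl x).2]
      have h1 : Integrable (fun x => ((l x + 1)/2) * fθ x) μ :=
        integrable_bdd_mul ((hml.add_const 1).div_const 2) hbl2 hfθint
      rw [← integral_const_mul, ← integral_sub (h1.const_mul 2) hfθint]
      refine integral_congr_ae (Eventually.of_forall fun x => ?_)
      dsimp only
      ring
    have hleft : Tendsto (fun k => ⟪ys (φ k), θ⟫) atTop (𝓝 ⟪y, θ⟫) :=
      (hy.comp hφ.tendsto_atTop).inner tendsto_const_nhds
    have heq_j : ∀ j, ⟪ys j, θ⟫ = 2 * (∫ x, g j x * fθ x ∂μ) - ∫ x, fθ x ∂μ := by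
      intro j
      rw [hyeq j, hinner_eq (lam j) (hm j) (hb j) θ, hchg (lam j) (hm j) (hb j),
        hsplit (lam j) (hm j) (hb j)]
    have hright : Tendsto (fun k => ⟪ys (φ k), θ⟫) atTop
        (𝓝 (2 * (∫ x, G x * fθ x ∂μ) - ∫ x, fθ x ∂μ)) := by
      rw [funext fun k => heq_j (φ k)]
      exact ((hGlim fθ hfθint).const_mul 2).sub tendsto_const_nhds
    have hkey : ⟪y, θ⟫ = 2 * (∫ x, G x * fθ x ∂μ) - ∫ x, fθ x ∂μ :=
      tendsto_nhds_unique hleft hright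
    have hG_eq : (fun x => ((lam' x + 1)/2)) = G := by
      funext x
      simp only [hlam'_def]
      ring
    rw [hkey, hinner_eq lam' hm' hb' θ, hchg lam' hm' hb', hsplit lam' hm' hb']
    rw [show (fun x => ((lam' x + 1)/2 * fθ x)) = fun x => G x * fθ x from
      funext fun x => by rw [← hG_eq]]
  -- K equals the centroid body
  have hKsub : K ⊆ centroidBody (Measure.map X ℙ) := by
    intro y hy u
    rw [hmap_abs u]
    exact hub u y hy
  have hKeq : K = centroidBody (Measure.map X ℙ) := by
    refine Set.Subset.antisymm hKsub ?_
    intro z hz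
    by_contra hzK
    obtain ⟨f, u, hfu, huf⟩ := geometric_hahn_banach_closed_point hconv hclosed hzK
    set θ := (InnerProductSpace.toDual ℝ (EuclideanSpace ℝ (Fin n))).symm f with hθ_def
    have hfw : ∀ w, f w = ⟪w, θ⟫ := by
      intro w
      rw [real_inner_comm]
      exact (InnerProductSpace.toDual_symm_apply).symm
    have h2 : ∫ ω, |⟪X ω, θ⟫| ≤ u := by
      rw [← hsup θ]
      refine csSup_le ⟨_, Set.mem_image_of_mem _ h0K⟩ ?_
      rintro z' ⟨w, hwK, rfl⟩
      dsimp only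
      rw [← hfw w]
      exact (hfu w hwK).le
    have h3 : ⟪z, θ⟫ ≤ ∫ ω, |⟪X ω, θ⟫| := by
      have hzθ := hz θ
      rwa [hmap_abs θ] at hzθ
    rw [hfw z] at huf
    linarith
  exact ⟨⟨0, h0K⟩, hclosed, hbdd, hconv, hsup, hKeq⟩
end

section
/- Let X be a real-valued symmetric random variable with E(|X|^{1+γ}) ≤ M for some M > 1 and 0 < γ < 1, let X⁽¹⁾,…,X⁽ᴺ⁾ be i.i.d. copies of X, and let Ẽ_N[|X|] = (|X⁽¹⁾| + ⋯ + |X⁽ᴺ⁾|)/N. Then for every ε ∈ (0,1), if N ≥ (8M/ε)^{1/2 + 1/γ}, we have P( |Ẽ_N[|X|] − E|X|| > ε ) ≤ 8M / (ε² N^{γ/3}). -/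
open MeasureTheory ProbabilityTheory
open scoped ENNReal

set_option maxHeartbeats 1000000 in
/-- empirical estimation of `E|X|` for a symmetric random variable with bounded
`(1+γ)`-moment: if `N ≥ (8M/ε)^{1/2 + 1/γ}`, then
`P(|Ẽ_N|X| − E|X|| > ε) ≤ 8M/(ε² N^{γ/3})`. -/
theorem empirical_abs_mean_concentration
    {Ω : Type*} [MeasureSpace Ω] [IsProbabilityMeasure (ℙ : Measure Ω)]
    (γ M : ℝ) (hγ : γ ∈ Set.Ioo (0 : ℝ) 1) (hM : 1 < M)
    (X : Ω → ℝ) (hX : Measurable X)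
    (hsym : Measure.map X ℙ = Measure.map (fun ω => -X ω) ℙ)
    (hintmom : Integrable (fun ω => |X ω| ^ (1 + γ)) ℙ)
    (hmom : ∫ ω, |X ω| ^ (1 + γ) ≤ M)
    (N : ℕ) (Xs : Fin N → Ω → ℝ) (hXs : ∀ i, Measurable (Xs i))
    (hindep : iIndepFun Xs ℙ)
    (hident : ∀ i, IdentDistrib (Xs i) X ℙ ℙ)
    (ε : ℝ) (hε : ε ∈ Set.Ioo (0 : ℝ) 1)
    (hN : (8 * M / ε) ^ ((1 : ℝ) / 2 + 1 / γ) ≤ (N : ℝ)) :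
    ℙ {ω | ε < abs ((∑ i, |Xs i ω|) / N - ∫ ω', |X ω'|)} ≤
      ENNReal.ofReal (8 * M / (ε ^ 2 * (N : ℝ) ^ (γ / 3))) := by
  obtain ⟨hγ0, hγ1⟩ := hγ
  obtain ⟨hε0, hε1⟩ := hε
  have hM0 : (0 : ℝ) < M := lt_trans one_pos hM
  have h8M : (1 : ℝ) < 8 * M / ε := by rw [lt_div_iff₀ hε0]; nlinarith
  have h2M : (1 : ℝ) < 2 * M / ε := by rw [lt_div_iff₀ hε0]; nlinarith
  have hN1 : (1 : ℝ) ≤ (N : ℝ) :=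
    le_trans (Real.one_le_rpow h8M.le (by positivity)) hN
  have hNpos : (0 : ℝ) < (N : ℝ) := lt_of_lt_of_le one_pos hN1
  -- the truncation level
  set a : ℝ := (3 + γ) / (3 * (1 + γ)) with ha_def
  set c : ℝ := (3 - γ) / (3 * (1 - γ)) with hc_def
  set B : ℝ := max ((2 * M / ε) ^ (1/γ)) ((N : ℝ) ^ a) with hB_def
  have hB1 : (1 : ℝ) ≤ B :=
    le_trans (Real.one_le_rpow h2M.le (by positivity)) (le_max_left _ _)
  have hB0 : (0 : ℝ) < B := lt_of_lt_of_le one_pos hB1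
  -- key inequality 1 : N * N^(γ/3) ≤ B^(1+γ)
  have key1 : (N : ℝ) * (N : ℝ) ^ (γ/3) ≤ B ^ (1 + γ) := by
    have h1 : ((N : ℝ) ^ a) ^ (1 + γ) ≤ B ^ (1 + γ) :=
      Real.rpow_le_rpow (by positivity) (le_max_right _ _) (by positivity)
    have h2 : ((N : ℝ) ^ a) ^ (1 + γ) = (N : ℝ) ^ (1 + γ/3) := by
      rw [← Real.rpow_mul hNpos.le]
      congr 1
      field_simp [ha_def]
      have : a * (3 * (1 + γ)) = 3 + γ := by
        rw [ha_def]; exact div_mul_cancel₀ _ (by positivity)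
      linear_combination this
    have h3 : (N : ℝ) ^ (1 + γ/3) = (N : ℝ) * (N : ℝ) ^ (γ/3) := by
      rw [Real.rpow_add hNpos, Real.rpow_one]
    rw [h2, h3] at h1; exact h1
  -- key inequality 2 : B^(1-γ) ≤ N^(1-γ/3)
  have key2 : B ^ (1 - γ) ≤ (N : ℝ) ^ (1 - γ/3) := by
    have hBc : B ≤ (N : ℝ) ^ c := by
      apply max_le
      · -- (2M/ε)^(1/γ) ≤ N^c
        have h1γ : (0:ℝ) < 1 - γ := by linarith
        have hcpos : (0:ℝ) < c := by rw [hc_def]; exact div_pos (by linarith) (by nlinarith)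
        have h1 : ((8 * M / ε) ^ ((1:ℝ)/2 + 1/γ)) ^ c ≤ ((N : ℝ)) ^ c :=
          Real.rpow_le_rpow (by positivity) hN hcpos.le
        have h2 : ((8 * M / ε) ^ ((1:ℝ)/2 + 1/γ)) ^ c
            = (8 * M / ε) ^ (((1:ℝ)/2 + 1/γ) * c) := by
          rw [← Real.rpow_mul (by positivity)]
        have h3 : (2 * M / ε) ^ (1/γ) ≤ (8 * M / ε) ^ (1/γ) :=
          Real.rpow_le_rpow (by positivity)
            (by rw [div_le_div_iff₀ hε0 hε0]; nlinarith) (by positivity)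
        have h4 : (8 * M / ε) ^ (1/γ) ≤ (8 * M / ε) ^ (((1:ℝ)/2 + 1/γ) * c) := by
          apply Real.rpow_le_rpow_of_exponent_le h8M.le
          rw [hc_def, ← sub_nonneg]
          have e : ((1:ℝ)/2 + 1/γ) * ((3 - γ) / (3 * (1 - γ))) - 1/γ
              = (7*γ - γ^2) / (6*γ*(1-γ)) := by
            field_simp
            ring
          rw [e]
          apply div_nonneg <;> nlinarith
        calc (2 * M / ε) ^ (1/γ) ≤ (8 * M / ε) ^ (1/γ) := h3
          _ ≤ (8 * M / ε) ^ (((1:ℝ)/2 + 1/γ) * c) := h4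
          _ = ((8 * M / ε) ^ ((1:ℝ)/2 + 1/γ)) ^ c := h2.symm
          _ ≤ (N : ℝ) ^ c := h1
      · apply Real.rpow_le_rpow_of_exponent_le hN1
        rw [ha_def, hc_def,
          div_le_div_iff₀ (by positivity) (by nlinarith : (0:ℝ) < 3 * (1 - γ))]
        nlinarith
    calc B ^ (1 - γ) ≤ ((N : ℝ) ^ c) ^ (1 - γ) :=
          Real.rpow_le_rpow hB0.le hBc (by nlinarith)
      _ = (N : ℝ) ^ (c * (1 - γ)) := by rw [← Real.rpow_mul hNpos.le]
      _ = (N : ℝ) ^ (1 - γ/3) := by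
          congr 1
          have h1γ : (1:ℝ) - γ ≠ 0 := by linarith
          rw [hc_def]; field_simp
  -- key inequality 3 : 2M/ε ≤ B^γ
  have key3 : 2 * M / ε ≤ B ^ γ := by
    have h1 : ((2 * M / ε) ^ (1/γ)) ^ γ ≤ B ^ γ :=
      Real.rpow_le_rpow (by positivity) (le_max_left _ _) hγ0.le
    rwa [← Real.rpow_mul (by positivity), one_div, inv_mul_cancel₀ hγ0.ne',
      Real.rpow_one] at h1
  -- pointwise lemmas
  have pt_le : ∀ t : ℝ, 0 ≤ t → t ≤ 1 + t ^ (1 + γ) := by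
    intro t ht
    rcases le_or_gt t 1 with h | h
    · have : (0:ℝ) ≤ t ^ (1 + γ) := Real.rpow_nonneg ht _
      linarith
    · have h2 : t ≤ t ^ (1 + γ) := by
        nth_rewrite 1 [← Real.rpow_one t]
        exact Real.rpow_le_rpow_of_exponent_le h.le (by linarith)
      linarith
  have ptL1 : ∀ t : ℝ, 0 ≤ t → t - min t B ≤ t ^ (1 + γ) / B ^ γ := by
    intro t ht
    rcases le_or_gt t B with h | h
    · rw [min_eq_left h]
      simp only [sub_self]
      positivity
    · rw [min_eq_right h.le]
      rw [sub_le_iff_le_add, div_add' _ _ _ (by positivity : B ^ γ ≠ 0)]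
      rw [le_div_iff₀ (by positivity : (0:ℝ) < B ^ γ)]
      have h1 : t ^ (1 + γ) = t * t ^ γ := by
        rw [Real.rpow_add (lt_of_le_of_lt hB0.le h), Real.rpow_one]
      have h2 : B ^ γ ≤ t ^ γ := Real.rpow_le_rpow hB0.le h.le hγ0.le
      have h3 : 0 ≤ B * B ^ γ := by positivity
      nlinarith [h2, h1]
  have ptL2 : ∀ t : ℝ, 0 ≤ t → (min t B) ^ 2 ≤ B ^ (1 - γ) * t ^ (1 + γ) := by
    intro t ht
    set s := min t B with hs
    have hs0 : 0 ≤ s := le_min ht hB0.le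
    rcases eq_or_lt_of_le hs0 with h | h
    · rw [← h]
      have : (0:ℝ) ^ 2 = 0 := by norm_num
      rw [this]
      positivity
    · have hsB : s ≤ B := min_le_right _ _
      have hst : s ≤ t := min_le_left _ _
      have e1 : s ^ 2 = s ^ (1 + γ) * s ^ (1 - γ) := by
        rw [← Real.rpow_add h, ← Real.rpow_two]
        norm_num
      rw [e1]
      have h1 : s ^ (1 + γ) ≤ t ^ (1 + γ) := Real.rpow_le_rpow hs0 hst (by linarith)
      have h2 : s ^ (1 - γ) ≤ B ^ (1 - γ) := Real.rpow_le_rpow hs0 hsB (by linarith)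
      have h4 : (0:ℝ) ≤ t ^ (1 + γ) := Real.rpow_nonneg ht _
      have h5 : (0:ℝ) ≤ s ^ (1 + γ) := Real.rpow_nonneg hs0 _
      have h6 : (0:ℝ) ≤ s ^ (1 - γ) := Real.rpow_nonneg hs0 _
      calc s ^ (1 + γ) * s ^ (1 - γ) ≤ t ^ (1 + γ) * B ^ (1 - γ) :=
            mul_le_mul h1 h2 h6 h4
        _ = B ^ (1 - γ) * t ^ (1 + γ) := mul_comm _ _
  -- truncated variables
  set Z : Fin N → Ω → ℝ := fun i ω => min (|Xs i ω|) B with hZ_def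
  set Z0 : Ω → ℝ := fun ω => min (|X ω|) B with hZ0_def
  have hmin_meas : Measurable fun x : ℝ => min |x| B := by fun_prop
  have idZ : ∀ i, IdentDistrib (Z i) Z0 ℙ ℙ := fun i => (hident i).comp hmin_meas
  have idabs : ∀ i, IdentDistrib (fun ω => |Xs i ω|) (fun ω => |X ω|) ℙ ℙ :=
    fun i => (hident i).comp measurable_abs
  have idmom : ∀ i, IdentDistrib (fun ω => |Xs i ω| ^ (1 + γ))
      (fun ω => |X ω| ^ (1 + γ)) ℙ ℙ :=
    fun i => (hident i).comp (by fun_prop : Measurable fun x : ℝ => |x| ^ (1 + γ))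
  -- integrability
  have hYint : Integrable (fun ω => |X ω|) ℙ := by
    refine Integrable.mono' ((integrable_const (1:ℝ)).add hintmom)
      hX.abs.aestronglyMeasurable (Filter.Eventually.of_forall fun ω => ?_)
    rw [Real.norm_eq_abs, abs_abs]
    exact pt_le _ (abs_nonneg _)
  have hYiint : ∀ i, Integrable (fun ω => |Xs i ω|) ℙ :=
    fun i => (idabs i).integrable_iff.mpr hYint
  have hmomi : ∀ i, Integrable (fun ω => |Xs i ω| ^ (1 + γ)) ℙ :=
    fun i => (idmom i).integrable_iff.mpr hintmom
  have hmomi_int : ∀ i, ∫ ω, |Xs i ω| ^ (1 + γ) = ∫ ω, |X ω| ^ (1 + γ) :=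
    fun i => (idmom i).integral_eq
  -- Z is bounded, hence MemLp 2
  have hZbd : ∀ (f : Ω → ℝ), Measurable f →
      MemLp (fun ω => min (|f ω|) B) 2 ℙ := by
    intro f hf
    refine MemLp.of_bound (hf.abs.min measurable_const).aestronglyMeasurable B (Filter.Eventually.of_forall fun ω => ?_)
    rw [Real.norm_eq_abs, abs_of_nonneg (le_min (abs_nonneg _) hB0.le)]
    exact min_le_right _ _
  have memZ : ∀ i, MemLp (Z i) 2 ℙ := fun i => hZbd _ (hXs i)
  have memZ0 : MemLp Z0 2 ℙ := hZbd _ hX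
  have hZint : ∀ i, Integrable (Z i) ℙ := fun i => (memZ i).integrable one_le_two
  have hZ0int : Integrable Z0 ℙ := memZ0.integrable one_le_two
  -- abbreviations for means
  set m0 : ℝ := ∫ ω, |X ω| with hm0_def
  set mZ : ℝ := ∫ ω, Z0 ω with hmZ_def
  -- bias bound : m0 - mZ ≤ ε/2, and mZ ≤ m0
  have hbias : m0 - mZ ≤ ε / 2 := by
    have h1 : m0 - mZ = ∫ ω, (|X ω| - Z0 ω) := (integral_sub hYint hZ0int).symm
    have h2 : ∫ ω, (|X ω| - Z0 ω) ≤ ∫ ω, |X ω| ^ (1 + γ) / B ^ γ := by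
      apply integral_mono (hYint.sub hZ0int) (hintmom.div_const _)
      intro ω
      exact ptL1 _ (abs_nonneg _)
    have h3 : ∫ ω, |X ω| ^ (1 + γ) / B ^ γ = (∫ ω, |X ω| ^ (1 + γ)) / B ^ γ :=
      integral_div _ _
    have h4 : (∫ ω, |X ω| ^ (1 + γ)) / B ^ γ ≤ M / B ^ γ := by
      apply div_le_div_of_nonneg_right hmom (by positivity)
    have h5 : M / B ^ γ ≤ ε / 2 := by
      rw [div_le_div_iff₀ (by positivity) (by norm_num)]
      have := key3
      rw [div_le_iff₀ hε0] at this
      nlinarith [this]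
    linarith [h1, h2, h3, h4, h5]
  have hmZle : mZ ≤ m0 := by
    apply integral_mono hZ0int hYint
    intro ω; exact min_le_left _ _
  -- variance bound
  have hvarZ0 : variance Z0 ℙ ≤ B ^ (1 - γ) * M := by
    have h1 : variance Z0 ℙ ≤ ∫ ω, (Z0 ω) ^ 2 := by
      have := variance_le_expectation_sq (μ := ℙ) (X := Z0) memZ0.aestronglyMeasurable
      simpa using this
    have h2 : ∫ ω, (Z0 ω) ^ 2 ≤ ∫ ω, B ^ (1 - γ) * |X ω| ^ (1 + γ) := by
      apply integral_mono memZ0.integrable_sq (hintmom.const_mul _)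
      intro ω
      exact ptL2 _ (abs_nonneg _)
    have h3 : ∫ ω, B ^ (1 - γ) * |X ω| ^ (1 + γ)
        = B ^ (1 - γ) * ∫ ω, |X ω| ^ (1 + γ) := integral_const_mul _ _
    have h4 : B ^ (1 - γ) * (∫ ω, |X ω| ^ (1 + γ)) ≤ B ^ (1 - γ) * M := by
      apply mul_le_mul_of_nonneg_left hmom (by positivity)
    linarith
  -- sum of truncated variables
  set S : Ω → ℝ := ∑ i, Z i with hS_def
  have hES : ℙ[S] = N * mZ := by
    rw [hS_def]
    simp only [Finset.sum_apply]
    rw [integral_finset_sum _ (fun i _ => hZint i)]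
    rw [Finset.sum_congr rfl (fun i _ => (idZ i).integral_eq)]
    simp [Finset.card_univ, hmZ_def]
  have hVarS : variance S ℙ = N * variance Z0 ℙ := by
    rw [hS_def, IndepFun.variance_sum (fun i _ => memZ i)
      (fun i _ j _ hij => (hindep.comp (fun _ => fun x : ℝ => min |x| B)
        (fun _ => hmin_meas)).indepFun hij)]
    rw [Finset.sum_congr rfl (fun i _ => (idZ i).variance_eq)]
    simp [Finset.card_univ]
  -- Chebyshev
  have memS : MemLp S 2 ℙ := memLp_finset_sum' _ (fun i _ => memZ i)
  have cheb : ℙ {ω | (N : ℝ) * ε / 2 ≤ |S ω - ℙ[S]|} ≤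
      ENNReal.ofReal (4 * B ^ (1 - γ) * M / (ε ^ 2 * N)) := by
    refine le_trans (meas_ge_le_variance_div_sq memS (by positivity)) ?_
    apply ENNReal.ofReal_le_ofReal
    rw [hVarS]
    rw [div_le_div_iff₀ (by positivity) (by positivity)]
    have hv0 : (0:ℝ) ≤ variance Z0 ℙ := variance_nonneg _ _
    have := mul_le_mul_of_nonneg_left hvarZ0 (le_of_lt hNpos)
    nlinarith [this, sq_nonneg ε, hNpos]
  -- tail bound for each i
  have tail : ∀ i, ℙ {ω | B < |Xs i ω|} ≤ ENNReal.ofReal (M / B ^ (1 + γ)) := by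
    intro i
    have hsub : {ω | B < |Xs i ω|} ⊆ {ω | B ^ (1 + γ) ≤ |Xs i ω| ^ (1 + γ)} := by
      intro ω hω
      exact Real.rpow_le_rpow hB0.le (le_of_lt hω) (by linarith)
    refine le_trans (measure_mono hsub) ?_
    have hmark := mul_meas_ge_le_integral_of_nonneg
      (Filter.Eventually.of_forall fun ω => Real.rpow_nonneg (abs_nonneg (Xs i ω)) _)
      (hmomi i) (B ^ (1 + γ))
    rw [hmomi_int i] at hmark
    have hBpow : (0:ℝ) < B ^ (1 + γ) := by positivity
    have hfin : ℙ {ω | B ^ (1 + γ) ≤ |Xs i ω| ^ (1 + γ)} ≠ ⊤ := measure_ne_top _ _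
    rw [← ENNReal.ofReal_toReal hfin]
    apply ENNReal.ofReal_le_ofReal
    rw [le_div_iff₀ hBpow]
    calc (ℙ {ω | B ^ (1 + γ) ≤ |Xs i ω| ^ (1 + γ)}).toReal * B ^ (1 + γ)
        = B ^ (1 + γ) * (ℙ {ω | B ^ (1 + γ) ≤ |Xs i ω| ^ (1 + γ)}).toReal := mul_comm _ _
      _ ≤ ∫ ω, |X ω| ^ (1 + γ) := hmark
      _ ≤ M := hmom
  -- event inclusion
  have hincl : {ω | ε < |(∑ i, |Xs i ω|) / N - m0|} ⊆
      (⋃ i, {ω | B < |Xs i ω|}) ∪ {ω | (N : ℝ) * ε / 2 ≤ |S ω - ℙ[S]|} := by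
    intro ω hω
    simp only [Set.mem_setOf_eq] at hω
    by_cases hall : ∀ i, |Xs i ω| ≤ B
    · right
      simp only [Set.mem_setOf_eq]
      have hSω : S ω = ∑ i, |Xs i ω| := by
        rw [hS_def, Finset.sum_apply]
        exact Finset.sum_congr rfl fun i _ => min_eq_left (hall i)
      rw [hES, hSω]
      set T : ℝ := ∑ i, |Xs i ω| with hT_def
      have h1 : (N : ℝ) * ε < |T - N * m0| := by
        have := hω
        rw [abs_sub_comm] at this
        have h2 : |m0 - T / N| * N < |m0 - T / N| * N ∨ True := Or.inr trivial
        have h3 : |T - N * m0| = |T / N - m0| * N := by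
          rw [← abs_of_pos hNpos, ← abs_mul]
          congr 1
          rw [abs_of_pos hNpos, sub_mul, div_mul_cancel₀ _ hNpos.ne', mul_comm m0]
        rw [h3]
        calc (N : ℝ) * ε = ε * N := mul_comm _ _
          _ < |T / N - m0| * N := by
              apply mul_lt_mul_of_pos_right hω hNpos
      have h4 : |N * mZ - N * m0| ≤ N * ε / 2 := by
        rw [← mul_sub, abs_mul, abs_of_pos hNpos, abs_of_nonpos (by linarith)]
        have : -(mZ - m0) = m0 - mZ := by ring
        rw [this]
        calc (N:ℝ) * (m0 - mZ) ≤ N * (ε/2) := by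
              apply mul_le_mul_of_nonneg_left hbias hNpos.le
          _ = N * ε / 2 := by ring
      have h5 : |T - N * m0| ≤ |T - N * mZ| + |N * mZ - N * m0| := abs_sub_le _ _ _
      have : (N : ℝ) * ε / 2 ≤ |T - N * mZ| := by linarith
      linarith [this]
    · left
      push_neg at hall
      obtain ⟨i, hi⟩ := hall
      exact Set.mem_iUnion.mpr ⟨i, hi⟩
  -- put everything together
  calc ℙ {ω | ε < |(∑ i, |Xs i ω|) / N - m0|}
      ≤ ℙ ((⋃ i, {ω | B < |Xs i ω|}) ∪ {ω | (N : ℝ) * ε / 2 ≤ |S ω - ℙ[S]|}) :=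
        measure_mono hincl
    _ ≤ ℙ (⋃ i, {ω | B < |Xs i ω|}) + ℙ {ω | (N : ℝ) * ε / 2 ≤ |S ω - ℙ[S]|} :=
        measure_union_le _ _
    _ ≤ (∑ _i : Fin N, ENNReal.ofReal (M / B ^ (1 + γ)))
        + ENNReal.ofReal (4 * B ^ (1 - γ) * M / (ε ^ 2 * N)) := by
        apply add_le_add
        · exact le_trans (measure_iUnion_fintype_le _ _) (Finset.sum_le_sum fun i _ => tail i)
        · exact cheb
    _ = ENNReal.ofReal ((N : ℝ) * (M / B ^ (1 + γ)))
        + ENNReal.ofReal (4 * B ^ (1 - γ) * M / (ε ^ 2 * N)) := by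
        congr 1
        rw [Finset.sum_const, Finset.card_univ, Fintype.card_fin, nsmul_eq_mul,
          ENNReal.ofReal_mul (Nat.cast_nonneg N), ENNReal.ofReal_natCast]
    _ = ENNReal.ofReal ((N : ℝ) * (M / B ^ (1 + γ)) + 4 * B ^ (1 - γ) * M / (ε ^ 2 * N)) := by
        rw [ENNReal.ofReal_add (by positivity) (by positivity)]
    _ ≤ ENNReal.ofReal (8 * M / (ε ^ 2 * (N : ℝ) ^ (γ / 3))) := by
        apply ENNReal.ofReal_le_ofReal
        have hNg : (0:ℝ) < (N : ℝ) ^ (γ/3) := by positivity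
        have t1 : (N : ℝ) * (M / B ^ (1 + γ)) ≤ M / (N : ℝ) ^ (γ/3) := by
          rw [mul_div_assoc']
          rw [div_le_div_iff₀ (by positivity) hNg]
          calc (N:ℝ) * M * (N:ℝ)^(γ/3) = M * ((N:ℝ) * (N:ℝ)^(γ/3)) := by ring
            _ ≤ M * B ^ (1+γ) := by
                apply mul_le_mul_of_nonneg_left key1 hM0.le
            _ = M * B ^ (1+γ) := rfl
        have hNsplit : (N : ℝ) ^ ((1:ℝ) - γ/3) * (N : ℝ) ^ (γ/3) = (N : ℝ) := by
          rw [← Real.rpow_add hNpos]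
          norm_num
        have t2 : 4 * B ^ (1 - γ) * M / (ε ^ 2 * N) ≤ 4 * M / (ε ^ 2 * (N : ℝ) ^ (γ/3)) := by
          rw [div_le_div_iff₀ (by positivity) (by positivity)]
          have h1 : B ^ (1-γ) * (N:ℝ)^(γ/3) ≤ (N:ℝ) := by
            calc B ^ (1-γ) * (N:ℝ)^(γ/3) ≤ (N:ℝ)^((1:ℝ)-γ/3) * (N:ℝ)^(γ/3) := by
                  apply mul_le_mul_of_nonneg_right key2 hNg.le
              _ = (N:ℝ) := hNsplit
          nlinarith [mul_le_mul_of_nonneg_left h1 (by positivity : (0:ℝ) ≤ 4 * M * ε ^ 2)]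
        have t3 : M / (N : ℝ) ^ (γ/3) ≤ 4 * M / (ε ^ 2 * (N : ℝ) ^ (γ/3)) := by
          rw [div_le_div_iff₀ hNg (by positivity)]
          have hε2 : ε ^ 2 ≤ 1 := by nlinarith
          nlinarith [mul_le_mul_of_nonneg_right hε2 (le_of_lt (mul_pos hM0 hNg))]
        have t4 : 4 * M / (ε ^ 2 * (N : ℝ) ^ (γ/3)) + 4 * M / (ε ^ 2 * (N : ℝ) ^ (γ/3))
            = 8 * M / (ε ^ 2 * (N : ℝ) ^ (γ/3)) := by
          rw [← add_div]
          ring_nf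
        linarith [t1, t2, t3, t4]
end

section
/- Let U be a family of probability distributions on ℝⁿ each of which is a product distribution, and let Ū be the closure of U under pushforwards by invertible linear transformations. Let Q be a map assigning to each P ∈ Ū a probability distribution Q(P) on ℝⁿ such that: (1) for all P ∈ U, Q(P) is absolutely symmetric; (2) Q is linearly equivariant, i.e. Q(T·P) = T·Q(P) for every invertible linear T (where T·P denotes pushforward); (3) for every P ∈ Ū, the covariance matrix Cov(Q(P)) is positive definite. Then for any symmetric ICA model X = AS with the distribution P_S of S in U, the matrix Cov(Q(P_X))^{−1/2} is an orthogonalizer of X, i.e. (Cov(Q(P_X))^{−1/2} A)ᵀ (Cov(Q(P_X))^{−1/2} A) is diagonal with positive diagonal. -/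
open MeasureTheory Matrix
open scoped ENNReal

/-- The covariance matrix of a distribution `ν` on `ℝⁿ`. -/
noncomputable def covMatrixOfMeasure {n : ℕ} (ν : Measure (Fin n → ℝ)) :
    Matrix (Fin n) (Fin n) ℝ :=
  Matrix.of fun i j => ∫ x, (x i - ∫ y, y i ∂ν) * (x j - ∫ y, y j ∂ν) ∂ν

/-- A distribution on `ℝⁿ` is absolutely symmetric if it is invariant under independent sign
flips of each coordinate. -/
def AbsolutelySymmetricPi {n : ℕ} (ν : Measure (Fin n → ℝ)) : Prop :=
  ∀ ε : Fin n → ℝ, (∀ i, ε i = 1 ∨ ε i = -1) →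
    Measure.map (fun x i => ε i * x i) ν = ν

private lemma flipMeas {n : ℕ} (ε : Fin n → ℝ) :
    Measurable (fun x : Fin n → ℝ => fun i => ε i * x i) :=
  measurable_pi_lambda _ fun i => Measurable.const_mul (f := fun x : Fin n → ℝ => x i) (measurable_pi_apply i) (ε i)

private lemma mulVecMeas {n : ℕ} (M : Matrix (Fin n) (Fin n) ℝ) :
    Measurable (M.mulVec) := by
  apply measurable_pi_lambda
  intro i
  simp only [Matrix.mulVec, dotProduct]
  exact Finset.measurable_sum _ fun j _ => Measurable.const_mul (f := fun x : Fin n → ℝ => x j) (measurable_pi_apply j) (M i j)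

private lemma integral_flip {n : ℕ} {ν : Measure (Fin n → ℝ)} (hν : AbsolutelySymmetricPi ν)
    {ε : Fin n → ℝ} (hε : ∀ i, ε i = 1 ∨ ε i = -1)
    {g : (Fin n → ℝ) → ℝ} (hg : AEStronglyMeasurable g ν) :
    ∫ x, g x ∂ν = ∫ x, g (fun i => ε i * x i) ∂ν := by
  conv_lhs => rw [← hν ε hε]
  exact integral_map (flipMeas ε).aemeasurable (by rw [hν ε hε]; exact hg)

private lemma integral_odd_eq_zero {n : ℕ} {ν : Measure (Fin n → ℝ)}
    (hν : AbsolutelySymmetricPi ν) {g : (Fin n → ℝ) → ℝ}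
    (hg : AEStronglyMeasurable g ν)
    (hodd : ∀ x : Fin n → ℝ, g (fun i => (-1 : ℝ) * x i) = - g x) :
    ∫ x, g x ∂ν = 0 := by
  have h := integral_flip hν (ε := fun _ => (-1:ℝ)) (fun i => Or.inr rfl) hg
  have h2 : ∫ x, g (fun i => (-1:ℝ) * x i) ∂ν = - ∫ x, g x ∂ν := by
    rw [show (fun x : Fin n → ℝ => g (fun i => (-1:ℝ) * x i)) = fun x => - g x from
      funext fun x => hodd x, integral_neg]
  rw [h2] at h
  linarith

private lemma integral_cross_zero {n : ℕ} {ν : Measure (Fin n → ℝ)}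
    (hν : AbsolutelySymmetricPi ν) {k l : Fin n} (hkl : k ≠ l) :
    ∫ x, x k * x l ∂ν = 0 := by
  have hg : AEStronglyMeasurable (fun x : Fin n → ℝ => x k * x l) ν :=
    ((measurable_pi_apply k).mul (measurable_pi_apply l)).aestronglyMeasurable
  have h := integral_flip hν (ε := fun i => if i = k then (-1:ℝ) else 1)
    (fun i => by by_cases h : i = k <;> simp [h]) hg
  have h2 : (∫ x, ((fun i => if i = k then (-1:ℝ) else 1) k * x k)
      * ((fun i => if i = k then (-1:ℝ) else 1) l * x l) ∂ν) = - ∫ x, x k * x l ∂ν := by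
    rw [show (fun x : Fin n → ℝ => ((fun i => if i = k then (-1:ℝ) else 1) k * x k)
        * ((fun i => if i = k then (-1:ℝ) else 1) l * x l)) = fun x => -(x k * x l) by
      funext x
      rw [show (fun i : Fin n => if i = k then (-1:ℝ) else 1) k = -1 from if_pos rfl,
        show (fun i : Fin n => if i = k then (-1:ℝ) else 1) l = 1 from
          if_neg (fun h' : l = k => hkl h'.symm)]
      ring]
    rw [integral_neg]
  rw [h2] at h
  linarith

private lemma integrable_of_ne {α : Type*} [MeasurableSpace α] {μ : Measure α} {f : α → ℝ}
    (h : ∫ x, f x ∂μ ≠ 0) : Integrable f μ := by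
  by_contra hc; exact h (integral_undef hc)

/-- Means vanish for pushforwards of absolutely symmetric measures by matrices. -/
private lemma mean_zero {n : ℕ} {ν : Measure (Fin n → ℝ)} (hν : AbsolutelySymmetricPi ν)
    (M : Matrix (Fin n) (Fin n) ℝ) (i : Fin n) :
    ∫ y, y i ∂(Measure.map M.mulVec ν) = 0 := by
  rw [integral_map (mulVecMeas M).aemeasurable (measurable_pi_apply i).aestronglyMeasurable]
  apply integral_odd_eq_zero hν ((mulVecMeas M).eval.aestronglyMeasurable)
  intro x
  simp only [Matrix.mulVec, dotProduct, ← Finset.sum_neg_distrib]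
  congr 1; funext j; ring

private lemma cov_map_entry {n : ℕ} {ν : Measure (Fin n → ℝ)} (hν : AbsolutelySymmetricPi ν)
    (M : Matrix (Fin n) (Fin n) ℝ) (i j : Fin n) :
    covMatrixOfMeasure (Measure.map M.mulVec ν) i j
      = ∫ x, M.mulVec x i * M.mulVec x j ∂ν := by
  simp only [covMatrixOfMeasure, Matrix.of_apply, mean_zero hν M, sub_zero]
  exact integral_map (mulVecMeas M).aemeasurable
    ((measurable_pi_apply i).mul (measurable_pi_apply j)).aestronglyMeasurable

private lemma cov_entry {n : ℕ} {ν : Measure (Fin n → ℝ)} (hν : AbsolutelySymmetricPi ν)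
    (i j : Fin n) :
    covMatrixOfMeasure ν i j = ∫ x, x i * x j ∂ν := by
  have h1 : Measure.map (1 : Matrix (Fin n) (Fin n) ℝ).mulVec ν = ν := by
    have : (1 : Matrix (Fin n) (Fin n) ℝ).mulVec = id := funext fun x => Matrix.one_mulVec x
    rw [this, Measure.map_id]
  have h2 := cov_map_entry hν (1 : Matrix (Fin n) (Fin n) ℝ) i j
  rw [h1] at h2
  rw [h2]
  simp [Matrix.one_mulVec]

private lemma posdef_diag {n : ℕ} {M : Matrix (Fin n) (Fin n) ℝ} (h : M.PosDef) (k : Fin n) :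
    0 < M k k := by
  exact h.diag_pos

/-- abstract orthogonalizer lemma.  Let `U` be a family of product distributions
on `ℝⁿ` and `Ū` its closure under pushforwards by invertible linear maps.  If `Q` maps each
`P ∈ Ū` to a distribution such that (1) `Q(P)` is absolutely symmetric for `P ∈ U`, (2) `Q` is
linearly equivariant, and (3) `Cov(Q(P))` is positive definite for `P ∈ Ū`, then for any
symmetric ICA model `X = AS` with `P_S ∈ U`, the matrix `Cov(Q(P_X))^{−1/2}` (the positive
definite `B` with `B·B = Cov(Q(P_X))⁻¹`) is an orthogonalizer of `X`. -/
theorem abstract_orthogonalizer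
    {n : ℕ} (U : Set (Measure (Fin n → ℝ)))
    (hU : ∀ μ ∈ U, IsProbabilityMeasure μ ∧
      ∃ μi : Fin n → Measure ℝ, (∀ i, IsProbabilityMeasure (μi i)) ∧ μ = Measure.pi μi)
    (Q : Measure (Fin n → ℝ) → Measure (Fin n → ℝ)) :
    let Ubar : Set (Measure (Fin n → ℝ)) :=
      {ν | ∃ μ ∈ U, ∃ T : (Fin n → ℝ) ≃ₗ[ℝ] (Fin n → ℝ), ν = Measure.map (⇑T) μ}
    (∀ μ ∈ U, AbsolutelySymmetricPi (Q μ)) →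
    (∀ μ ∈ Ubar, ∀ T : (Fin n → ℝ) ≃ₗ[ℝ] (Fin n → ℝ),
      Q (Measure.map (⇑T) μ) = Measure.map (⇑T) (Q μ)) →
    (∀ μ ∈ Ubar, (covMatrixOfMeasure (Q μ)).PosDef) →
    ∀ νS ∈ U, AbsolutelySymmetricPi νS →
    ∀ A : Matrix (Fin n) (Fin n) ℝ, IsUnit A →
    ∀ B : Matrix (Fin n) (Fin n) ℝ, B.PosDef →
      B * B = (covMatrixOfMeasure (Q (Measure.map (A.mulVec) νS)))⁻¹ →
      ∃ d : Fin n → ℝ, (∀ i, 0 < d i) ∧ (B * A)ᵀ * (B * A) = Matrix.diagonal d := by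
  intro Ubar h1 h2 h3 νS hνSU hνSsym A hA B hB hBB
  set ν := Q νS with hνdef
  have hνS_bar : νS ∈ Ubar := ⟨νS, hνSU, LinearEquiv.refl ℝ _, by
    rw [show ⇑(LinearEquiv.refl ℝ (Fin n → ℝ)) = id from rfl, Measure.map_id]⟩
  have hsym : AbsolutelySymmetricPi ν := h1 νS hνSU
  have hD : (covMatrixOfMeasure ν).PosDef := h3 νS hνS_bar
  have hcoe : ∀ (M : Matrix (Fin n) (Fin n) ℝ) (hM : Invertible M),
      ⇑(M.toLinearEquiv' hM) = M.mulVec := fun M hM => funext fun x => Matrix.toLin'_apply M x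
  have key : ∀ (M : Matrix (Fin n) (Fin n) ℝ), Invertible M →
      Q (Measure.map M.mulVec νS) = Measure.map M.mulVec ν := by
    intro M hM
    have := h2 νS hνS_bar (M.toLinearEquiv' hM)
    rwa [hcoe M hM] at this
  have keyPD : ∀ (M : Matrix (Fin n) (Fin n) ℝ), Invertible M →
      (covMatrixOfMeasure (Measure.map M.mulVec ν)).PosDef := by
    intro M hM
    have hmem : Measure.map M.mulVec νS ∈ Ubar :=
      ⟨νS, hνSU, M.toLinearEquiv' hM, by rw [hcoe M hM]⟩
    have := h3 _ hmem
    rwa [key M hM] at this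
  -- diagonal second moments
  set d : Fin n → ℝ := fun k => ∫ x, x k * x k ∂ν with hd
  have hdpos : ∀ k, 0 < d k := by
    intro k
    have := posdef_diag hD k
    rwa [cov_entry hsym k k] at this
  have hdiagInt : ∀ k, Integrable (fun x : Fin n → ℝ => x k * x k) ν :=
    fun k => integrable_of_ne (ne_of_gt (hdpos k))
  -- cross second moments are integrable, using the shear matrix
  have hcrossInt : ∀ k l : Fin n, k ≠ l →
      Integrable (fun x : Fin n → ℝ => x k * x l) ν := by
    intro k l hkl
    set E : Matrix (Fin n) (Fin n) ℝ := Matrix.single k l 1 with hE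
    have hEE : E * E = 0 := by
      rw [hE]
      exact Matrix.single_mul_single_of_ne (c := (1:ℝ)) k l k (fun h : l = k => hkl h.symm) (1:ℝ)
    have hSinv : Invertible (1 + E) := by
      refine ⟨1 - E, ?_, ?_⟩
      · have : (1 - E) * (1 + E) = 1 - E * E := by noncomm_ring
        rw [this, hEE, sub_zero]
      · have : (1 + E) * (1 - E) = 1 - E * E := by noncomm_ring
        rw [this, hEE, sub_zero]
    have hmv : ∀ x : Fin n → ℝ, (1 + E).mulVec x k = x k + x l := by
      intro x
      rw [Matrix.add_mulVec, Matrix.one_mulVec]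
      simp only [Pi.add_apply, hE]
      congr 1
      simp [Matrix.mulVec, dotProduct, Matrix.single, ite_and, Matrix.of_apply]
    have hPD := keyPD (1 + E) hSinv
    have hkk := posdef_diag hPD k
    rw [cov_map_entry hsym (1 + E) k k] at hkk
    have hsumInt : Integrable (fun x : Fin n → ℝ => (x k + x l) * (x k + x l)) ν := by
      have := integrable_of_ne (ne_of_gt hkk)
      have heq : (fun x : Fin n → ℝ => (1 + E).mulVec x k * (1 + E).mulVec x k)
          = fun x => (x k + x l) * (x k + x l) := funext fun x => by rw [hmv x]
      rwa [heq] at this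
    have : (fun x : Fin n → ℝ => x k * x l)
        = fun x => (2 : ℝ)⁻¹ * ((x k + x l) * (x k + x l) - x k * x k - x l * x l) := by
      funext x; ring
    rw [this]
    exact (((hsumInt.sub (hdiagInt k)).sub (hdiagInt l)).const_mul _)
  have hInt : ∀ k l : Fin n, Integrable (fun x : Fin n → ℝ => x k * x l) ν := by
    intro k l
    by_cases h : k = l
    · subst h; exact hdiagInt k
    · exact hcrossInt k l h
  -- the covariance of Q P_X
  have hAinv : Invertible A := hA.invertible
  have hC : covMatrixOfMeasure (Q (Measure.map A.mulVec νS))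
      = A * Matrix.diagonal d * Aᵀ := by
    rw [key A hAinv]
    ext i j
    rw [cov_map_entry hsym A i j]
    have expand : (fun x : Fin n → ℝ => A.mulVec x i * A.mulVec x j)
        = fun x => ∑ k, ∑ l, (A i k * A j l) * (x k * x l) := by
      funext x
      simp only [Matrix.mulVec, dotProduct, Finset.sum_mul_sum]
      exact Finset.sum_congr rfl fun k _ => Finset.sum_congr rfl fun l _ => by ring
    rw [expand]
    rw [integral_finset_sum _ (fun k _ =>
      integrable_finset_sum _ (fun l _ => (hInt k l).const_mul _))]
    have hterm : ∀ k : Fin n,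
        (∫ x, ∑ l, (A i k * A j l) * (x k * x l) ∂ν) = A i k * A j k * d k := by
      intro k
      rw [integral_finset_sum _ (fun l _ => (hInt k l).const_mul _)]
      have : ∀ l : Fin n, (∫ x, (A i k * A j l) * (x k * x l) ∂ν)
          = if k = l then A i k * A j k * d k else 0 := by
        intro l
        rw [integral_const_mul]
        by_cases h : k = l
        · subst h; rw [if_pos rfl, hd]
        · rw [if_neg h, integral_cross_zero hsym h, mul_zero]
      simp only [this, Finset.sum_ite_eq, Finset.mem_univ, if_true]
    rw [Finset.sum_congr rfl fun k _ => hterm k]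
    have hrhs : (A * Matrix.diagonal d * Aᵀ) i j = ∑ k, A i k * d k * A j k := by
      rw [Matrix.mul_apply]
      exact Finset.sum_congr rfl fun k _ => by
        rw [Matrix.mul_diagonal, Matrix.transpose_apply]
    rw [hrhs]
    exact Finset.sum_congr rfl fun k _ => by ring
  -- final algebra
  refine ⟨fun k => (d k)⁻¹, fun k => inv_pos.2 (hdpos k), ?_⟩
  have hBt : Bᵀ = B := by
    rw [← Matrix.conjTranspose_eq_transpose_of_trivial]
    exact hB.1
  have hAdet : IsUnit A.det := (Matrix.isUnit_iff_isUnit_det A).1 hA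
  have hAtdet : IsUnit Aᵀ.det := by rwa [Matrix.det_transpose]
  have hDinv : (Matrix.diagonal d)⁻¹ = Matrix.diagonal (fun k => (d k)⁻¹) :=
    Matrix.inv_eq_right_inv (by
      rw [Matrix.diagonal_mul_diagonal, ← Matrix.diagonal_one]
      exact congrArg Matrix.diagonal
        (funext fun k => mul_inv_cancel₀ (ne_of_gt (hdpos k))))
  have hDdet : IsUnit (Matrix.diagonal d).det := by
    rw [Matrix.det_diagonal]
    exact (Finset.prod_ne_zero_iff.2 fun k _ => ne_of_gt (hdpos k)).isUnit
  calc (B * A)ᵀ * (B * A) = Aᵀ * (B * B) * A := by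
        rw [Matrix.transpose_mul, hBt]; simp only [Matrix.mul_assoc]
    _ = Aᵀ * (A * Matrix.diagonal d * Aᵀ)⁻¹ * A := by rw [hBB, hC]
    _ = Matrix.diagonal fun k => (d k)⁻¹ := by
        rw [Matrix.mul_inv_rev, Matrix.mul_inv_rev, ← Matrix.mul_assoc,
          Matrix.mul_nonsing_inv Aᵀ hAtdet, Matrix.one_mul, Matrix.mul_assoc,
          Matrix.nonsing_inv_mul A hAdet, Matrix.mul_one, hDinv]
end

section
/- Let S = (S₁,…,Sₙ) be an absolutely symmetric random vector with E|Sᵢ| = 1 and E(|Sᵢ|^{1+γ}) ≤ M < ∞ for all i, where M > 1 and γ ∈ (0,1). Let S⁽¹⁾,…,S⁽ᴺ⁾ be i.i.d. copies of S and let Y be a random vector uniformly distributed on {S⁽¹⁾,…,S⁽ᴺ⁾}. For ε', δ' ∈ (0,1), if N ≥ (16 M n⁴ / ((ε')² δ'))^{1/2 + 3/γ}, then with probability at least 1 − δ' over the sample, (1 − ε') B₁ⁿ ⊆ ΓY. -/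
open MeasureTheory ProbabilityTheory
open scoped RealInnerProductSpace ENNReal Pointwise

/-- The empirical (uniform) distribution of a finite tuple of points of `ℝⁿ`. -/
noncomputable def empiricalMeasure {n N : ℕ} (x : Fin N → EuclideanSpace ℝ (Fin n)) :
    Measure (EuclideanSpace ℝ (Fin n)) :=
  (N : ℝ≥0∞)⁻¹ • ∑ i, Measure.dirac (x i)

/-- A distribution on `ℝⁿ` is absolutely symmetric if it is invariant under independent sign
flips of each coordinate. -/
def AbsolutelySymmetric {n : ℕ} (μ : Measure (EuclideanSpace ℝ (Fin n))) : Prop :=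
  ∀ ε : Fin n → ℝ, (∀ i, ε i = 1 ∨ ε i = -1) →
    Measure.map (fun x : EuclideanSpace ℝ (Fin n) =>
      (EuclideanSpace.equiv (Fin n) ℝ).symm fun i => ε i * x i) μ = μ

/-! ### Auxiliary lemmas -/

lemma measurable_realSign : Measurable Real.sign := by
  unfold Real.sign
  exact Measurable.ite (measurableSet_lt measurable_id measurable_const) measurable_const
    (Measurable.ite (measurableSet_lt measurable_const measurable_id) measurable_const
      measurable_const)

lemma sign_mul_self_abs (r : ℝ) : Real.sign r * r = |r| := by
  rcases lt_trichotomy r 0 with h | h | h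
  · rw [Real.sign_of_neg h, abs_of_neg h]; ring
  · simp [h]
  · rw [Real.sign_of_pos h, abs_of_pos h]; ring

lemma abs_sign_le_one (r : ℝ) : |Real.sign r| ≤ 1 := by
  rcases Real.sign_apply_eq r with h | h | h <;> simp [h]

lemma smul_le_abs' {s x : ℝ} (hs : |s| ≤ 1) : s * x ≤ |x| := by
  calc s * x ≤ |s * x| := le_abs_self _
  _ = |s| * |x| := abs_mul _ _
  _ ≤ 1 * |x| := mul_le_mul_of_nonneg_right hs (abs_nonneg x)
  _ = |x| := one_mul _

lemma integral_empiricalMeasure {n N : ℕ} (x : Fin N → EuclideanSpace ℝ (Fin n))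
    (f : EuclideanSpace ℝ (Fin n) → ℝ) :
    ∫ y, f y ∂(empiricalMeasure x) = (N : ℝ)⁻¹ * ∑ k, f (x k) := by
  have hint : ∀ k : Fin N, Integrable f (Measure.dirac (x k)) := by
    intro k
    refine (integrable_const (f (x k))).congr ?_
    rw [MeasureTheory.ae_dirac_eq]
    exact Filter.eventually_pure.2 rfl
  unfold empiricalMeasure
  rw [integral_smul_measure, integral_finset_sum_measure (fun k _ => hint k)]
  have : ((N : ℝ≥0∞)⁻¹).toReal = (N : ℝ)⁻¹ := by simp
  rw [this]
  simp only [smul_eq_mul]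
  congr 1
  exact Finset.sum_congr rfl fun k _ => integral_dirac f (x k)

lemma det_containment {n N : ℕ} (hn : 0 < n)
    (x : Fin N → EuclideanSpace ℝ (Fin n)) (ε' : ℝ) (hε0 : 0 < ε') (hε1 : ε' ≤ 1)
    (hcond : ∀ i : Fin n, 1 - ε' ≤ (N:ℝ)⁻¹ * ∑ k, |x k i|
      - ∑ j ∈ Finset.univ.erase i, |(N:ℝ)⁻¹ * ∑ k, Real.sign (x k i) * x k j|) :
    (1 - ε') • {y : EuclideanSpace ℝ (Fin n) | ∑ i, |y i| ≤ 1} ⊆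
      centroidBody (empiricalMeasure x) := by
  rintro z hz
  obtain ⟨y, hy, rfl⟩ := hz
  simp only [Set.mem_setOf_eq] at hy
  intro u
  have hinner : ∀ v : EuclideanSpace ℝ (Fin n), ⟪v, u⟫ = ∑ j, v j * u j := by
    intro v; simp [PiLp.inner_apply, RCLike.inner_apply]
    exact Finset.sum_congr rfl fun _ _ => mul_comm _ _
  haveI : Nonempty (Fin n) := ⟨⟨0, hn⟩⟩
  obtain ⟨i₀, -, hmax⟩ := Finset.exists_max_image (Finset.univ : Finset (Fin n))
    (fun j => |u j|) Finset.univ_nonempty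
  set c : Fin n → ℝ := fun j => (N:ℝ)⁻¹ * ∑ k, Real.sign (x k i₀) * x k j with hc
  have hLHS : ⟪(1 - ε') • y, u⟫ ≤ (1 - ε') * |u i₀| := by
    rw [real_inner_smul_left]
    refine mul_le_mul_of_nonneg_left ?_ (by linarith)
    rw [hinner]
    calc ∑ j, y j * u j ≤ ∑ j, |y j| * |u i₀| := by
          refine Finset.sum_le_sum fun j _ => ?_
          calc y j * u j ≤ |y j * u j| := le_abs_self _
          _ = |y j| * |u j| := abs_mul _ _
          _ ≤ |y j| * |u i₀| := mul_le_mul_of_nonneg_left (hmax j (Finset.mem_univ j))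
              (abs_nonneg _)
    _ = (∑ j, |y j|) * |u i₀| := by rw [Finset.sum_mul]
    _ ≤ 1 * |u i₀| := mul_le_mul_of_nonneg_right hy (abs_nonneg _)
    _ = |u i₀| := one_mul _
  rw [integral_empiricalMeasure]
  have hσ : ∀ k : Fin N, |Real.sign (u i₀) * Real.sign (x k i₀)| ≤ 1 := by
    intro k
    rw [abs_mul]
    exact mul_le_one₀ (abs_sign_le_one _) (abs_nonneg _) (abs_sign_le_one _)
  have step1 : (N:ℝ)⁻¹ * ∑ k, (Real.sign (u i₀) * Real.sign (x k i₀)) * ⟪x k, u⟫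
      ≤ (N:ℝ)⁻¹ * ∑ k, |⟪x k, u⟫| := by
    refine mul_le_mul_of_nonneg_left ?_ (by positivity)
    exact Finset.sum_le_sum fun k _ => smul_le_abs' (hσ k)
  have expand : (N:ℝ)⁻¹ * ∑ k, (Real.sign (u i₀) * Real.sign (x k i₀)) * ⟪x k, u⟫
      = ∑ j, Real.sign (u i₀) * u j * c j := by
    have h1 : ∀ k, (Real.sign (u i₀) * Real.sign (x k i₀)) * ⟪x k, u⟫
        = ∑ j, Real.sign (u i₀) * u j * (Real.sign (x k i₀) * x k j) := by
      intro k
      rw [hinner, Finset.mul_sum]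
      exact Finset.sum_congr rfl fun j _ => by ring
    simp_rw [h1]
    rw [Finset.sum_comm, Finset.mul_sum]
    refine Finset.sum_congr rfl fun j _ => ?_
    simp only [hc, Finset.mul_sum]
    exact Finset.sum_congr rfl fun k _ => by ring
  have hci₀ : c i₀ = (N:ℝ)⁻¹ * ∑ k, |x k i₀| := by
    rw [hc]; simp only; congr 1
    exact Finset.sum_congr rfl fun k _ => sign_mul_self_abs _
  have lower : (1 - ε') * |u i₀| ≤ ∑ j, Real.sign (u i₀) * u j * c j := by
    rw [← Finset.add_sum_erase _ _ (Finset.mem_univ i₀)]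
    have hterm : Real.sign (u i₀) * u i₀ * c i₀ = |u i₀| * c i₀ := by
      rw [sign_mul_self_abs]
    have hrest : ∀ j ∈ Finset.univ.erase i₀,
        -(|u i₀| * |c j|) ≤ Real.sign (u i₀) * u j * c j := by
      intro j hj
      have : |Real.sign (u i₀) * u j * c j| ≤ |u i₀| * |c j| := by
        rw [abs_mul, abs_mul]
        refine mul_le_mul_of_nonneg_right ?_ (abs_nonneg _)
        calc |Real.sign (u i₀)| * |u j| ≤ 1 * |u j| :=
              mul_le_mul_of_nonneg_right (abs_sign_le_one _) (abs_nonneg _)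
        _ = |u j| := one_mul _
        _ ≤ |u i₀| := hmax j (Finset.mem_univ j)
      linarith [neg_abs_le (Real.sign (u i₀) * u j * c j)]
    calc (1 - ε') * |u i₀|
        ≤ ((N:ℝ)⁻¹ * ∑ k, |x k i₀| - ∑ j ∈ Finset.univ.erase i₀, |c j|) * |u i₀| := by
          refine mul_le_mul_of_nonneg_right (hcond i₀) (abs_nonneg _)
    _ = |u i₀| * c i₀ + ∑ j ∈ Finset.univ.erase i₀, -(|u i₀| * |c j|) := by
          rw [hci₀, Finset.sum_neg_distrib, ← Finset.mul_sum]; ring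
    _ ≤ Real.sign (u i₀) * u i₀ * c i₀ + ∑ j ∈ Finset.univ.erase i₀,
          Real.sign (u i₀) * u j * c j := by
          rw [hterm]
          exact add_le_add le_rfl (Finset.sum_le_sum hrest)
  calc ⟪(1 - ε') • y, u⟫ ≤ (1 - ε') * |u i₀| := hLHS
  _ ≤ ∑ j, Real.sign (u i₀) * u j * c j := lower
  _ = (N:ℝ)⁻¹ * ∑ k, (Real.sign (u i₀) * Real.sign (x k i₀)) * ⟪x k, u⟫ := expand.symm
  _ ≤ (N:ℝ)⁻¹ * ∑ k, |⟪x k, u⟫| := step1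

lemma sign_mul_coord_measurable {n : ℕ} (i j : Fin n) :
    Measurable (fun x : EuclideanSpace ℝ (Fin n) => Real.sign (x i) * x j) :=
  (measurable_realSign.comp (by fun_prop : Measurable fun x : EuclideanSpace ℝ (Fin n) => x i)).mul
    (by fun_prop : Measurable fun x : EuclideanSpace ℝ (Fin n) => x j)

lemma sign_mul_mean_zero {n : ℕ} {Ω : Type*} [MeasureSpace Ω]
    [IsProbabilityMeasure (ℙ : Measure Ω)]
    (S : Ω → EuclideanSpace ℝ (Fin n)) (hS : Measurable S)
    (habs : AbsolutelySymmetric (Measure.map S ℙ))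
    (i j : Fin n) (hij : i ≠ j) :
    ∫ ω, Real.sign (S ω i) * S ω j = 0 := by
  classical
  set f : EuclideanSpace ℝ (Fin n) → ℝ := fun x => Real.sign (x i) * x j with hf
  have hfm : Measurable f := sign_mul_coord_measurable i j
  set ε : Fin n → ℝ := fun l => if l = i then -1 else 1 with hε
  have hεvals : ∀ l, ε l = 1 ∨ ε l = -1 := by
    intro l; by_cases h : l = i <;> simp [hε, h]
  set flip : EuclideanSpace ℝ (Fin n) → EuclideanSpace ℝ (Fin n) :=
    fun x => (EuclideanSpace.equiv (Fin n) ℝ).symm fun l => ε l * x l with hflip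
  have hflipm : Measurable flip := by
    have : Measurable (fun x : EuclideanSpace ℝ (Fin n) => fun l => ε l * x l) :=
      measurable_pi_lambda _ fun l =>
        ((by fun_prop : Measurable fun x : EuclideanSpace ℝ (Fin n) => x l).const_mul
          (ε l))
    exact ((EuclideanSpace.equiv (Fin n) ℝ).symm.continuous.measurable).comp this
  have hinv := habs ε hεvals
  have hcomp : ∀ x, f (flip x) = - f x := by
    intro x
    have h1 : (flip x) i = - x i := by simp [hflip, hε]
    have h2 : (flip x) j = x j := by simp [hflip, hε, hij.symm]
    simp [hf, h1, h2, Real.sign_neg]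
  have hI : ∫ x, f x ∂(Measure.map S ℙ) = - ∫ x, f x ∂(Measure.map S ℙ) := by
    conv_lhs => rw [← hinv]
    rw [integral_map hflipm.aemeasurable (hfm.aestronglyMeasurable)]
    simp_rw [hcomp]
    rw [integral_neg]
  have hI0 : ∫ x, f x ∂(Measure.map S ℙ) = 0 := by linarith
  have heq : ∫ x, f x ∂(Measure.map S ℙ) = ∫ ω, f (S ω) ∂ℙ :=
    integral_map hS.aemeasurable hfm.aestronglyMeasurable
  rw [hI0] at heq
  exact heq.symm
lemma conc {Ω : Type*} [MeasureSpace Ω] [IsProbabilityMeasure (ℙ : Measure Ω)] {N : ℕ}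
    (hN : 0 < N) (Z : Fin N → Ω → ℝ) (Z₀ : Ω → ℝ)
    (hZm : ∀ k, Measurable (Z k)) (hZ₀m : Measurable Z₀)
    (hindep : ∀ k l, k ≠ l → IndepFun (Z k) (Z l) ℙ)
    (hid : ∀ k, IdentDistrib (Z k) Z₀ ℙ ℙ)
    {γ M m R t : ℝ} (hγ0 : 0 < γ) (hγ1 : γ ≤ 1) (hR : 1 ≤ R) (ht : 0 < t) (hM : 0 < M)
    (hZint : Integrable Z₀ ℙ) (hmean : ∫ ω, Z₀ ω = m)
    (hmomint : Integrable (fun ω => |Z₀ ω| ^ (1+γ)) ℙ)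
    (hmom : ∫ ω, |Z₀ ω| ^ (1+γ) ≤ M)
    (hRt : 4 * M ≤ R ^ γ * t) :
    ℙ {ω | t < |(N:ℝ)⁻¹ * ∑ k, Z k ω - m|}
      ≤ ENNReal.ofReal (4*M*R^(1-γ)/(N*t^2)) + ENNReal.ofReal (4*M/(R^γ*t)) := by
  classical
  have hR0 : (0:ℝ) < R := lt_of_lt_of_le one_pos hR
  have hRγ : (0:ℝ) < R ^ γ := Real.rpow_pos_of_pos hR0 γ
  have hR1γ : (0:ℝ) ≤ R ^ (1-γ) := (Real.rpow_pos_of_pos hR0 _).le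
  have hNR : (0:ℝ) < (N:ℝ) := by exact_mod_cast hN
  -- truncation
  set T : ℝ → ℝ := fun z => if |z| ≤ R then z else 0 with hT
  have hTm : Measurable T := by
    refine Measurable.ite ?_ measurable_id measurable_const
    exact measurableSet_le (measurable_id.abs) measurable_const
  have hT_abs_le : ∀ z, |T z| ≤ |z| := by
    intro z; rw [hT]; dsimp only; split <;> simp [abs_nonneg]
  have hT_bound : ∀ z, |T z| ≤ R := by
    intro z; rw [hT]; dsimp only; split
    · assumption
    · simpa using hR0.le
  have htail_abs : ∀ z, |z - T z| ≤ |z| := by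
    intro z; rw [hT]; dsimp only; split <;> simp [abs_nonneg]
  have hmom_nonneg : ∀ z : ℝ, (0:ℝ) ≤ |z| ^ (1+γ) :=
    fun z => Real.rpow_nonneg (abs_nonneg z) _
  have hT_tail : ∀ z, |z - T z| ≤ |z| ^ (1+γ) / R ^ γ := by
    intro z; rw [hT]; dsimp only; split
    · simp only [sub_self, abs_zero]
      positivity
    · rename_i h
      push_neg at h
      have hz0 : (0:ℝ) < |z| := lt_trans hR0 h
      rw [sub_zero, le_div_iff₀ hRγ]
      calc |z| * R ^ γ ≤ |z| * |z| ^ γ :=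
            mul_le_mul_of_nonneg_left (Real.rpow_le_rpow hR0.le h.le hγ0.le) (abs_nonneg z)
      _ = |z| ^ ((1:ℝ)+γ) := by
            rw [Real.rpow_add hz0, Real.rpow_one]
  have hT_sq : ∀ z, (T z)^2 ≤ R^(1-γ) * |z| ^ (1+γ) := by
    intro z; rw [hT]; dsimp only; split
    · rename_i h
      rcases eq_or_ne z 0 with rfl | hz
      · simpa using mul_nonneg hR1γ (hmom_nonneg 0)
      · have hz0 : (0:ℝ) < |z| := abs_pos.2 hz
        have h2 : z ^ 2 = |z| ^ ((1:ℝ)-γ) * |z| ^ ((1:ℝ)+γ) := by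
          rw [← Real.rpow_add hz0,
            show (1:ℝ)-γ+(1+γ) = ((2:ℕ):ℝ) by push_cast; ring,
            Real.rpow_natCast, sq_abs]
        rw [h2]
        exact mul_le_mul_of_nonneg_right
          (Real.rpow_le_rpow hz0.le h (by linarith)) (hmom_nonneg z)
    · simpa using mul_nonneg hR1γ (hmom_nonneg z)
  -- truncated variables
  set Z' : Fin N → Ω → ℝ := fun k ω => T (Z k ω) with hZ'
  have hZ'm : ∀ k, Measurable (Z' k) := fun k => hTm.comp (hZm k)
  have hZ₀'m : Measurable (fun ω => T (Z₀ ω)) := hTm.comp hZ₀m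
  have hid' : ∀ k, IdentDistrib (Z' k) (fun ω => T (Z₀ ω)) ℙ ℙ := fun k => (hid k).comp hTm
  have hmem2 : ∀ k, MemLp (Z' k) 2 ℙ := by
    intro k
    refine (memLp_top_of_bound (hZ'm k).aestronglyMeasurable R
      (Filter.Eventually.of_forall fun ω => ?_)).mono_exponent le_top
    simpa [Real.norm_eq_abs] using hT_bound (Z k ω)
  have hmem2₀ : MemLp (fun ω => T (Z₀ ω)) 2 ℙ := by
    refine (memLp_top_of_bound hZ₀'m.aestronglyMeasurable R
      (Filter.Eventually.of_forall fun ω => ?_)).mono_exponent le_top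
    simpa [Real.norm_eq_abs] using hT_bound (Z₀ ω)
  set μ' : ℝ := ∫ ω, T (Z₀ ω) with hμ'
  have iZ₀' : Integrable (fun ω => T (Z₀ ω)) := hmem2₀.integrable one_le_two
  have itail₀ : Integrable (fun ω => |Z₀ ω - T (Z₀ ω)|) := (hZint.sub iZ₀').abs
  have htail_le : ∫ ω, |Z₀ ω - T (Z₀ ω)| ≤ M / R^γ := by
    calc ∫ ω, |Z₀ ω - T (Z₀ ω)| ≤ ∫ ω, |Z₀ ω|^(1+γ) / R^γ :=
          integral_mono itail₀ (hmomint.div_const _) (fun ω => hT_tail (Z₀ ω))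
    _ = (∫ ω, |Z₀ ω|^(1+γ)) / R^γ := integral_div _ _
    _ ≤ M / R^γ := by gcongr
  have hMRt : M / R^γ ≤ t/4 := by
    rw [div_le_iff₀ hRγ]
    nlinarith
  have hμ'' : |m - μ'| ≤ t/4 := by
    have h1 : m - μ' = ∫ ω, (Z₀ ω - T (Z₀ ω)) := by
      rw [integral_sub hZint iZ₀', hmean]
    have h2 : |∫ ω, (Z₀ ω - T (Z₀ ω))| ≤ ∫ ω, |Z₀ ω - T (Z₀ ω)| := by
      simpa [Real.norm_eq_abs] using
        norm_integral_le_integral_norm (fun ω => Z₀ ω - T (Z₀ ω))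
    rw [h1]
    linarith
  -- Chebyshev for the truncated sum
  set X : Ω → ℝ := fun ω => ∑ k, Z' k ω with hXdef
  have hXsum : X = ∑ k, Z' k := by
    funext ω; simp [hXdef, Finset.sum_apply]
  have hXmem : MemLp X 2 ℙ := by
    rw [hXsum]; exact memLp_finset_sum' _ (fun k _ => hmem2 k)
  have hEX : ∫ ω, X ω = N * μ' := by
    rw [hXdef]
    rw [integral_finset_sum _ (fun k _ => (hmem2 k).integrable one_le_two)]
    have : ∀ k : Fin N, ∫ ω, Z' k ω = μ' := fun k => (hid' k).integral_eq
    simp [this, Finset.sum_const, mul_comm]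
  have hvar₀ : variance (fun ω => T (Z₀ ω)) ℙ ≤ R^(1-γ) * M := by
    have h1 := variance_le_expectation_sq (μ := ℙ) (X := fun ω => T (Z₀ ω)) hZ₀'m.aestronglyMeasurable
    have h2 : (∫ ω, ((fun ω => T (Z₀ ω)) ^ 2) ω) ≤ R^(1-γ) * M := by
      simp only [Pi.pow_apply]
      calc ∫ ω, (T (Z₀ ω))^2 ≤ ∫ ω, R^(1-γ) * |Z₀ ω|^(1+γ) :=
            integral_mono hmem2₀.integrable_sq (hmomint.const_mul _)
              (fun ω => hT_sq (Z₀ ω))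
      _ = R^(1-γ) * ∫ ω, |Z₀ ω|^(1+γ) := integral_const_mul _ _
      _ ≤ R^(1-γ) * M := mul_le_mul_of_nonneg_left hmom hR1γ
    exact le_trans h1 h2
  have hVarX : variance X ℙ ≤ N * (R^(1-γ) * M) := by
    rw [hXsum, IndepFun.variance_sum (fun k _ => hmem2 k)
      (fun k _ l _ hkl => (hindep k l hkl).comp hTm hTm)]
    calc ∑ k : Fin N, variance (Z' k) ℙ = ∑ _k : Fin N, variance (fun ω => T (Z₀ ω)) ℙ :=
          Finset.sum_congr rfl fun k _ => (hid' k).variance_eq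
    _ = N * variance (fun ω => T (Z₀ ω)) ℙ := by
          simp [Finset.sum_const, mul_comm]
    _ ≤ N * (R^(1-γ) * M) := by
          refine mul_le_mul_of_nonneg_left hvar₀ (by positivity)
  have hc2 : (0:ℝ) < (N:ℝ)*t/2 := by positivity
  have cheb := meas_ge_le_variance_div_sq (μ := ℙ) hXmem hc2
  have hchebbound : ENNReal.ofReal (variance X ℙ / ((N:ℝ)*t/2)^2)
      ≤ ENNReal.ofReal (4*M*R^(1-γ)/((N:ℝ)*t^2)) := by
    apply ENNReal.ofReal_le_ofReal
    rw [div_le_div_iff₀ (by positivity) (by positivity)]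
    have hv0 : variance X ℙ ≤ (N:ℝ) * (R^(1-γ) * M) := hVarX
    nlinarith [hv0, sq_nonneg ((N:ℝ)*t), hR1γ, hM.le, hNR, ht]
  -- Markov for the tails
  set F : Ω → ℝ := fun ω => ∑ k, |Z k ω - T (Z k ω)| with hFdef
  have iZk : ∀ k, Integrable (Z k) := fun k => ((hid k).integrable_iff).2 hZint
  have iF : Integrable F := by
    rw [hFdef]
    exact integrable_finset_sum _
      (fun k _ => ((iZk k).sub ((hmem2 k).integrable one_le_two)).abs)
  have hEF : ∫ ω, F ω ≤ (N:ℝ) * (M / R^γ) := by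
    have hFsum : ∫ ω, F ω = ∑ k, ∫ ω, |Z k ω - T (Z k ω)| :=
      integral_finset_sum _
        (fun k _ => ((iZk k).sub ((hmem2 k).integrable one_le_two)).abs)
    rw [hFsum]
    have heach : ∀ k : Fin N, ∫ ω, |Z k ω - T (Z k ω)| = ∫ ω, |Z₀ ω - T (Z₀ ω)| := by
      intro k
      exact ((hid k).comp (u := fun z => |z - T z|) ((measurable_id.sub hTm).abs)).integral_eq
    calc ∑ k : Fin N, ∫ ω, |Z k ω - T (Z k ω)|
        = ∑ _k : Fin N, ∫ ω, |Z₀ ω - T (Z₀ ω)| := Finset.sum_congr rfl fun k _ => heach k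
    _ = (N:ℝ) * ∫ ω, |Z₀ ω - T (Z₀ ω)| := by simp [Finset.sum_const, mul_comm]
    _ ≤ (N:ℝ) * (M / R^γ) := mul_le_mul_of_nonneg_left htail_le hNR.le
  have hFnn : 0 ≤ᵐ[ℙ] F := Filter.Eventually.of_forall fun ω => by
    rw [hFdef]
    exact Finset.sum_nonneg fun k _ => abs_nonneg _
  have markov := mul_meas_ge_le_integral_of_nonneg hFnn iF ((N:ℝ)*t/4)
  have hmark : ℙ {ω | (N:ℝ)*t/4 ≤ F ω} ≤ ENNReal.ofReal (4*M/(R^γ*t)) := by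
    have hpos : (0:ℝ) < (N:ℝ)*t/4 := by positivity
    have h2 : ((N:ℝ)*t/4) * (ℙ {ω | (N:ℝ)*t/4 ≤ F ω}).toReal ≤ (N:ℝ) * (M / R^γ) :=
      le_trans markov hEF
    have h1 : (ℙ {ω | (N:ℝ)*t/4 ≤ F ω}).toReal ≤ 4*M/(R^γ*t) := by
      have h1' : (ℙ {ω | (N:ℝ)*t/4 ≤ F ω}).toReal ≤ ((N:ℝ)*(M/R^γ))/((N:ℝ)*t/4) :=
        (le_div_iff₀ hpos).2 (by linarith [h2])
      have heq : ((N:ℝ)*(M/R^γ))/((N:ℝ)*t/4) = 4*M/(R^γ*t) := by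
        field_simp
      rw [heq] at h1'
      exact h1'
    calc ℙ {ω | (N:ℝ)*t/4 ≤ F ω}
        = ENNReal.ofReal ((ℙ {ω | (N:ℝ)*t/4 ≤ F ω}).toReal) :=
          (ENNReal.ofReal_toReal (measure_ne_top _ _)).symm
    _ ≤ ENNReal.ofReal (4*M/(R^γ*t)) := ENNReal.ofReal_le_ofReal h1
  -- event inclusion
  have hincl : {ω | t < |(N:ℝ)⁻¹ * ∑ k, Z k ω - m|}
      ⊆ {ω | (N:ℝ)*t/2 ≤ |X ω - ∫ ω, X ω|} ∪ {ω | (N:ℝ)*t/4 ≤ F ω} := by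
    intro ω hω
    simp only [Set.mem_setOf_eq] at hω
    by_contra hcon
    simp only [Set.mem_union, Set.mem_setOf_eq, not_or, not_le] at hcon
    obtain ⟨h1, h2⟩ := hcon
    rw [hEX] at h1
    have e2 : |∑ k, (Z k ω - T (Z k ω))| ≤ F ω := by
      rw [hFdef]
      exact Finset.abs_sum_le_sum_abs _ _
    have e3 : |(N:ℝ)*(m-μ')| ≤ (N:ℝ)*(t/4) := by
      rw [abs_mul, abs_of_pos hNR]
      exact mul_le_mul_of_nonneg_left hμ'' hNR.le
    have e1 : ∑ k, Z k ω - (N:ℝ)*m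
        = (X ω - (N:ℝ)*μ') + ((∑ k, (Z k ω - T (Z k ω))) - (N:ℝ)*(m - μ')) := by
      rw [hXdef]
      simp only [hZ']
      rw [Finset.sum_sub_distrib]
      ring
    have e4 : |∑ k, Z k ω - (N:ℝ)*m| < (N:ℝ)*t := by
      rw [e1]
      calc |(X ω - (N:ℝ)*μ') + ((∑ k, (Z k ω - T (Z k ω))) - (N:ℝ)*(m - μ'))|
          ≤ |X ω - (N:ℝ)*μ'| + (|∑ k, (Z k ω - T (Z k ω))| + |(N:ℝ)*(m-μ')|) := by
            have ha := abs_add_le (X ω - (N:ℝ)*μ')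
              ((∑ k, (Z k ω - T (Z k ω))) - (N:ℝ)*(m - μ'))
            have hb := abs_sub (∑ k, (Z k ω - T (Z k ω))) ((N:ℝ)*(m - μ'))
            linarith
      _ < (N:ℝ)*t/2 + ((N:ℝ)*t/4 + (N:ℝ)*(t/4)) := by
            refine add_lt_add_of_lt_of_le h1 ?_
            exact add_le_add (le_trans e2 h2.le) e3
      _ = (N:ℝ)*t := by ring
    have e5 : (N:ℝ)⁻¹ * ∑ k, Z k ω - m = (N:ℝ)⁻¹ * (∑ k, Z k ω - (N:ℝ)*m) := by
      field_simp
    rw [e5, abs_mul, abs_of_pos (inv_pos.2 hNR)] at hω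
    have e6 : (N:ℝ)⁻¹ * |∑ k, Z k ω - (N:ℝ)*m| < (N:ℝ)⁻¹ * ((N:ℝ)*t) :=
      mul_lt_mul_of_pos_left e4 (inv_pos.2 hNR)
    rw [inv_mul_cancel_left₀ hNR.ne'] at e6
    linarith
  calc ℙ {ω | t < |(N:ℝ)⁻¹ * ∑ k, Z k ω - m|}
      ≤ ℙ ({ω | (N:ℝ)*t/2 ≤ |X ω - ∫ ω, X ω|} ∪ {ω | (N:ℝ)*t/4 ≤ F ω}) :=
        measure_mono hincl
  _ ≤ ℙ {ω | (N:ℝ)*t/2 ≤ |X ω - ∫ ω, X ω|} + ℙ {ω | (N:ℝ)*t/4 ≤ F ω} :=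
        measure_union_le _ _
  _ ≤ ENNReal.ofReal (4*M*R^(1-γ)/((N:ℝ)*t^2)) + ENNReal.ofReal (4*M/(R^γ*t)) :=
        add_le_add (le_trans cheb hchebbound) hmark


noncomputable def gsign {n : ℕ} (i j : Fin n) (x : EuclideanSpace ℝ (Fin n)) : ℝ :=
  if i = j then |x i| else Real.sign (x i) * x j

lemma gsign_measurable {n : ℕ} (i j : Fin n) : Measurable (gsign i j) := by
  unfold gsign
  by_cases h : i = j
  · simp only [if_pos h]
    exact (by fun_prop : Measurable fun x : EuclideanSpace ℝ (Fin n) => x i).abs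
  · simp only [if_neg h]
    exact sign_mul_coord_measurable i j

lemma gsign_abs_le {n : ℕ} (i j : Fin n) (x : EuclideanSpace ℝ (Fin n)) :
    |gsign i j x| ≤ |x j| := by
  unfold gsign
  by_cases h : i = j
  · subst h
    simp
  · simp only [if_neg h]
    rw [abs_mul]
    calc |Real.sign (x i)| * |x j| ≤ 1 * |x j| :=
          mul_le_mul_of_nonneg_right (abs_sign_le_one _) (abs_nonneg _)
    _ = |x j| := one_mul _

set_option maxHeartbeats 1000000 in
/-- for `S` absolutely symmetric with `E|Sᵢ| = 1` and `(1+γ)`-moments bounded by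
`M`, and `Y` uniform on `N ≥ (16Mn⁴/((ε')²δ'))^{1/2+3/γ}` i.i.d. samples of `S`, with
probability at least `1 − δ'` one has `(1−ε')B₁ⁿ ⊆ ΓY`. -/
theorem empirical_centroidBody_contains_shrunk_l1_ball
    {n : ℕ} {Ω : Type*} [MeasureSpace Ω] [IsProbabilityMeasure (ℙ : Measure Ω)]
    (γ M : ℝ) (hγ : γ ∈ Set.Ioo (0 : ℝ) 1) (hM : 1 < M)
    (S : Ω → EuclideanSpace ℝ (Fin n)) (hS : Measurable S)
    (habs : AbsolutelySymmetric (Measure.map S ℙ))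
    (hint : ∀ i, Integrable (fun ω => |S ω i|) ℙ)
    (hnorm : ∀ i, ∫ ω, |S ω i| = 1)
    (hintmom : ∀ i, Integrable (fun ω => |S ω i| ^ (1 + γ)) ℙ)
    (hmom : ∀ i, ∫ ω, |S ω i| ^ (1 + γ) ≤ M)
    (N : ℕ) (Sk : Fin N → Ω → EuclideanSpace ℝ (Fin n))
    (hSk : ∀ k, Measurable (Sk k))
    (hiid : iIndepFun Sk ℙ)
    (hident : ∀ k, IdentDistrib (Sk k) S ℙ ℙ)
    (ε' δ' : ℝ) (hε' : ε' ∈ Set.Ioo (0 : ℝ) 1) (hδ' : δ' ∈ Set.Ioo (0 : ℝ) 1)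
    (hN : (16 * M * (n : ℝ) ^ 4 / (ε' ^ 2 * δ')) ^ ((1 : ℝ) / 2 + 3 / γ) ≤ (N : ℝ)) :
    1 - ENNReal.ofReal δ' ≤
      ℙ {ω | (1 - ε') • {x : EuclideanSpace ℝ (Fin n) | ∑ i, |x i| ≤ 1} ⊆
          centroidBody (empiricalMeasure fun k => Sk k ω)} := by
  classical
  obtain ⟨hγ0, hγ1⟩ := hγ
  obtain ⟨hε0, hε1⟩ := hε'
  obtain ⟨hδ0, hδ1⟩ := hδ'
  -- trivial case n = 0
  rcases Nat.eq_zero_or_pos n with rfl | hn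
  · have hset : {ω | (1 - ε') • {x : EuclideanSpace ℝ (Fin 0) | ∑ i, |x i| ≤ 1} ⊆
        centroidBody (empiricalMeasure fun k => Sk k ω)} = Set.univ := by
      refine Set.eq_univ_of_forall fun ω => ?_
      rintro z hz u
      have hu : u = 0 := by ext i; exact i.elim0
      simp [hu]
    rw [hset, measure_univ]
    exact tsub_le_self
  -- main case
  have hn1 : (1:ℝ) ≤ (n:ℝ) := by exact_mod_cast hn
  have hM0 : (0:ℝ) < M := by linarith
  have hden : (0:ℝ) < ε'^2*δ' := by positivity
  obtain ⟨K, hKdef⟩ : ∃ K : ℝ, K = 16 * M * (n:ℝ)^4 / (ε'^2*δ') := ⟨_, rfl⟩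
  rw [← hKdef] at hN
  have hKmul : K * (ε'^2*δ') = 16*M*(n:ℝ)^4 := by
    rw [hKdef]; exact div_mul_cancel₀ _ hden.ne'
  have hn4 : (1:ℝ) ≤ (n:ℝ)^4 := one_le_pow₀ hn1
  have hK16 : (16:ℝ) ≤ K := by
    rw [hKdef, le_div_iff₀ hden]
    nlinarith
  have hK0 : (0:ℝ) < K := by linarith
  have hK1 : (1:ℝ) ≤ K := by linarith
  obtain ⟨R, hRdef⟩ : ∃ R : ℝ, R = K ^ ((1:ℝ)/γ) := ⟨_, rfl⟩
  obtain ⟨t, htdef⟩ : ∃ t : ℝ, t = ε' / (2*(n:ℝ)) := ⟨_, rfl⟩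
  have ht0 : (0:ℝ) < t := by rw [htdef]; positivity
  have hγne : γ ≠ 0 := hγ0.ne'
  have hRγK : R ^ γ = K := by
    rw [hRdef, ← Real.rpow_mul hK0.le, one_div_mul_cancel hγne, Real.rpow_one]
  have hR1 : (1:ℝ) ≤ R := by
    have := Real.rpow_le_rpow (by norm_num : (0:ℝ) ≤ 1) hK1 (by positivity : (0:ℝ) ≤ 1/γ)
    simpa [Real.one_rpow, hRdef] using this
  have hR0 : (0:ℝ) < R := lt_of_lt_of_le one_pos hR1
  -- arithmetic consequences of hN
  have hKRid : K * R ^ ((1:ℝ)-γ) = K ^ ((1:ℝ)/γ) := by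
    rw [hRdef, ← Real.rpow_mul hK0.le]
    rw [show ((1:ℝ)/γ * (1-γ)) = 1/γ - 1 by field_simp]
    rw [Real.rpow_sub hK0, Real.rpow_one]
    field_simp
  have h16half : ((16:ℝ)) ^ ((1:ℝ)/2) = 4 := by
    rw [show (16:ℝ) = 4^(2:ℕ) by norm_num, ← Real.rpow_natCast (4:ℝ) 2,
      ← Real.rpow_mul (by norm_num : (0:ℝ) ≤ 4)]
    norm_num
  have hKhalf : (4:ℝ) ≤ K ^ ((1:ℝ)/2) := by
    rw [← h16half]
    exact Real.rpow_le_rpow (by norm_num) hK16 (by norm_num)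
  have hK3γ : K ^ ((1:ℝ)/γ) ≤ K ^ ((3:ℝ)/γ) := by
    refine Real.rpow_le_rpow_of_exponent_le hK1 ?_
    gcongr
    norm_num
  have hKpos' : (0:ℝ) < K ^ ((3:ℝ)/γ) := Real.rpow_pos_of_pos hK0 _
  have hKpos'' : (0:ℝ) < K ^ ((1:ℝ)/γ) := Real.rpow_pos_of_pos hK0 _
  have hNge : 4 * K ^ ((1:ℝ)/γ) ≤ (N:ℝ) := by
    have h1 : K ^ ((1:ℝ)/2 + 3/γ) = K ^ ((1:ℝ)/2) * K ^ ((3:ℝ)/γ) := by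
      rw [← Real.rpow_add hK0]
    have h2 : 4 * K ^ ((3:ℝ)/γ) ≤ K ^ ((1:ℝ)/2) * K ^ ((3:ℝ)/γ) :=
      mul_le_mul_of_nonneg_right hKhalf hKpos'.le
    have h3 : 4 * K ^ ((1:ℝ)/γ) ≤ 4 * K ^ ((3:ℝ)/γ) := by linarith [hK3γ]
    calc 4 * K ^ ((1:ℝ)/γ) ≤ 4 * K ^ ((3:ℝ)/γ) := h3
    _ ≤ K ^ ((1:ℝ)/2) * K ^ ((3:ℝ)/γ) := h2
    _ = K ^ ((1:ℝ)/2 + 3/γ) := h1.symm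
    _ ≤ (N:ℝ) := hN
  have hN0 : 0 < N := by
    by_contra h
    push_neg at h
    interval_cases N
    simp only [Nat.cast_zero] at hNge
    nlinarith
  have hNR : (0:ℝ) < (N:ℝ) := by positivity
  have hn2 : (0:ℝ) < (n:ℝ)^2 := by positivity
  -- the three numeric conditions
  have hKε : 16*M*(n:ℝ)^4 ≤ K * ε' := by
    calc 16*M*(n:ℝ)^4 = K * (ε'^2*δ') := hKmul.symm
    _ ≤ K * ε' := by
        refine mul_le_mul_of_nonneg_left ?_ hK0.le
        nlinarith
  have hRt : 4 * M ≤ R ^ γ * t := by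
    rw [hRγK, htdef,
      show K * (ε'/(2*(n:ℝ))) = K*ε'/(2*(n:ℝ)) by ring,
      le_div_iff₀ (by positivity : (0:ℝ) < 2*(n:ℝ))]
    have h3 : (1:ℝ) ≤ (n:ℝ)^3 := one_le_pow₀ hn1
    have hnn : (n:ℝ) ≤ (n:ℝ)^4 := by
      calc (n:ℝ) = (n:ℝ)*1 := by ring
      _ ≤ (n:ℝ)*(n:ℝ)^3 := mul_le_mul_of_nonneg_left h3 (by linarith)
      _ = (n:ℝ)^4 := by ring
    have h8 : 8*M*(n:ℝ) ≤ 16*M*(n:ℝ)^4 := by nlinarith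
    linarith
  have cheb_cond : 4*M*R^((1:ℝ)-γ)/((N:ℝ)*t^2) ≤ δ'/(2*(n:ℝ)^2) := by
    obtain ⟨A, hA⟩ : ∃ A : ℝ, A = R^((1:ℝ)-γ) := ⟨_, rfl⟩
    rw [← hA]
    have hA0 : (0:ℝ) < A := by rw [hA]; exact Real.rpow_pos_of_pos hR0 _
    have hNlow : 2*(K * A) ≤ (N:ℝ) := by rw [hA, hKRid]; linarith
    have key : 32*M*(n:ℝ)^4*A ≤ (N:ℝ)*(ε'^2*δ') := by
      have h1 : (2*(K*A))*(ε'^2*δ') ≤ (N:ℝ)*(ε'^2*δ') :=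
        mul_le_mul_of_nonneg_right hNlow hden.le
      nlinarith [hKmul, hA0]
    have ht2 : t^2 = ε'^2/(4*(n:ℝ)^2) := by
      rw [htdef]; field_simp; ring
    rw [div_le_div_iff₀ (by positivity) (by positivity), ht2,
      show δ'*((N:ℝ)*(ε'^2/(4*(n:ℝ)^2))) = ((N:ℝ)*(ε'^2*δ'))/(4*(n:ℝ)^2) by ring,
      le_div_iff₀ (by positivity : (0:ℝ) < 4*(n:ℝ)^2)]
    nlinarith [key]
  have mark_cond : 4*M/(R^γ*t) ≤ δ'/(2*(n:ℝ)^2) := by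
    have hKed0 : (0:ℝ) < K*ε'*δ' := by positivity
    have e1 : (K*ε'*δ')*ε' = 16*M*(n:ℝ)^4 := by rw [← hKmul]; ring
    have hn3 : (n:ℝ)^3 ≤ (n:ℝ)^4 := by nlinarith
    have key2 : 16*M*(n:ℝ)^3 ≤ K*ε'*δ' := by nlinarith
    rw [hRγK, htdef,
      show K * (ε'/(2*(n:ℝ))) = K*ε'/(2*(n:ℝ)) by ring,
      div_le_div_iff₀ (by positivity) (by positivity),
      show δ'*(K*ε'/(2*(n:ℝ))) = (K*ε'*δ')/(2*(n:ℝ)) by ring,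
      le_div_iff₀ (by positivity : (0:ℝ) < 2*(n:ℝ))]
    nlinarith [key2]
  -- probabilistic bounds for each pair of coordinates
  have hBad : ∀ i j : Fin n,
      ℙ {ω | t < |(N:ℝ)⁻¹ * ∑ k, gsign i j (Sk k ω) - (if i = j then (1:ℝ) else 0)|}
        ≤ ENNReal.ofReal (δ'/((n:ℝ)^2)) := by
    intro i j
    have hgm := gsign_measurable i j
    have hZ₀m : Measurable (fun ω => gsign i j (S ω)) := hgm.comp hS
    have habs_le : ∀ ω, |gsign i j (S ω)| ≤ |S ω j| := fun ω => gsign_abs_le i j (S ω)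
    have hZint : Integrable (fun ω => gsign i j (S ω)) :=
      (hint j).mono' hZ₀m.aestronglyMeasurable
        (Filter.Eventually.of_forall fun ω => by
          simpa [Real.norm_eq_abs] using habs_le ω)
    have hmean : ∫ ω, gsign i j (S ω) = (if i = j then (1:ℝ) else 0) := by
      by_cases h : i = j
      · subst h
        simp only [if_pos rfl]
        simpa [gsign] using hnorm i
      · simp only [if_neg h]
        have := sign_mul_mean_zero S hS habs i j h
        simpa [gsign, h] using this
    have hptw : ∀ ω, |gsign i j (S ω)|^((1:ℝ)+γ) ≤ |S ω j|^((1:ℝ)+γ) :=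
      fun ω => Real.rpow_le_rpow (abs_nonneg _) (habs_le ω) (by linarith)
    have hmomi : Integrable (fun ω => |gsign i j (S ω)|^((1:ℝ)+γ)) := by
      refine (hintmom j).mono' ?_ (Filter.Eventually.of_forall fun ω => ?_)
      · exact ((Real.continuous_rpow_const (by linarith : (0:ℝ) ≤ 1+γ)).measurable.comp
          hZ₀m.abs).aestronglyMeasurable
      · rw [Real.norm_eq_abs, abs_of_nonneg (Real.rpow_nonneg (abs_nonneg _) _)]
        exact hptw ω
    have hmom' : ∫ ω, |gsign i j (S ω)|^((1:ℝ)+γ) ≤ M :=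
      le_trans (integral_mono hmomi (hintmom j) (fun ω => hptw ω)) (hmom j)
    have hindep : ∀ k l, k ≠ l →
        IndepFun (fun ω => gsign i j (Sk k ω)) (fun ω => gsign i j (Sk l ω)) ℙ :=
      fun k l hkl => (hiid.indepFun hkl).comp hgm hgm
    have hid : ∀ k, IdentDistrib (fun ω => gsign i j (Sk k ω)) (fun ω => gsign i j (S ω)) ℙ ℙ :=
      fun k => (hident k).comp hgm
    have hconc := conc hN0 (fun k ω => gsign i j (Sk k ω)) (fun ω => gsign i j (S ω))
      (fun k => hgm.comp (hSk k)) hZ₀m hindep hid hγ0 hγ1.le hR1 ht0 hM0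
      hZint hmean hmomi hmom' hRt
    refine le_trans hconc ?_
    have h1 : ENNReal.ofReal (4*M*R^((1:ℝ)-γ)/((N:ℝ)*t^2))
        ≤ ENNReal.ofReal (δ'/(2*(n:ℝ)^2)) := ENNReal.ofReal_le_ofReal cheb_cond
    have h2 : ENNReal.ofReal (4*M/(R^γ*t))
        ≤ ENNReal.ofReal (δ'/(2*(n:ℝ)^2)) := ENNReal.ofReal_le_ofReal mark_cond
    calc ENNReal.ofReal (4*M*R^((1:ℝ)-γ)/((N:ℝ)*t^2)) + ENNReal.ofReal (4*M/(R^γ*t))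
        ≤ ENNReal.ofReal (δ'/(2*(n:ℝ)^2)) + ENNReal.ofReal (δ'/(2*(n:ℝ)^2)) :=
          add_le_add h1 h2
    _ = ENNReal.ofReal (δ'/(2*(n:ℝ)^2) + δ'/(2*(n:ℝ)^2)) :=
          (ENNReal.ofReal_add (by positivity) (by positivity)).symm
    _ = ENNReal.ofReal (δ'/(n:ℝ)^2) := by
          rw [show δ'/(2*(n:ℝ)^2) + δ'/(2*(n:ℝ)^2) = δ'/(n:ℝ)^2 by ring]
  set B : Fin n → Fin n → Set Ω := fun i j =>
    {ω | t < |(N:ℝ)⁻¹ * ∑ k, gsign i j (Sk k ω) - (if i = j then (1:ℝ) else 0)|} with hB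
  have hUnion : ℙ (⋃ i, ⋃ j, B i j) ≤ ENNReal.ofReal δ' := by
    calc ℙ (⋃ i, ⋃ j, B i j) ≤ ∑ i, ℙ (⋃ j, B i j) :=
          le_trans (measure_iUnion_le _) (le_of_eq (tsum_fintype _))
    _ ≤ ∑ i : Fin n, ∑ j : Fin n, ℙ (B i j) :=
          Finset.sum_le_sum fun i _ =>
            le_trans (measure_iUnion_le _) (le_of_eq (tsum_fintype _))
    _ ≤ ∑ _i : Fin n, ∑ _j : Fin n, ENNReal.ofReal (δ'/(n:ℝ)^2) :=
          Finset.sum_le_sum fun i _ => Finset.sum_le_sum fun j _ => hBad i j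
    _ = ((n*n : ℕ) : ℝ≥0∞) * ENNReal.ofReal (δ'/(n:ℝ)^2) := by
          simp [Finset.sum_const, Finset.card_univ, nsmul_eq_mul]
          push_cast
          ring
    _ = ENNReal.ofReal (((n*n : ℕ) : ℝ) * (δ'/(n:ℝ)^2)) := by
          rw [ENNReal.ofReal_mul (by positivity), ENNReal.ofReal_natCast]
    _ = ENNReal.ofReal δ' := by
          congr 1
          have hnne : (n:ℝ) ≠ 0 := by positivity
          push_cast
          field_simp
  have hGood : (⋃ i, ⋃ j, B i j)ᶜ ⊆
      {ω | (1 - ε') • {x : EuclideanSpace ℝ (Fin n) | ∑ i, |x i| ≤ 1} ⊆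
          centroidBody (empiricalMeasure fun k => Sk k ω)} := by
    intro ω hω
    simp only [Set.mem_compl_iff, Set.mem_iUnion, not_exists] at hω
    have hω' : ∀ i j : Fin n,
        |(N:ℝ)⁻¹ * ∑ k, gsign i j (Sk k ω) - (if i = j then (1:ℝ) else 0)| ≤ t := by
      intro i j
      have := hω i j
      rw [hB] at this
      simp only [Set.mem_setOf_eq, not_lt] at this
      exact this
    refine det_containment hn (fun k => Sk k ω) ε' hε0 hε1.le ?_
    intro i
    have hdiag : |(N:ℝ)⁻¹ * ∑ k, |Sk k ω i| - 1| ≤ t := by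
      have := hω' i i
      simpa [gsign] using this
    have hoff : ∀ j ∈ Finset.univ.erase i,
        |(N:ℝ)⁻¹ * ∑ k, Real.sign (Sk k ω i) * Sk k ω j| ≤ t := by
      intro j hj
      have hji : j ≠ i := Finset.ne_of_mem_erase hj
      have := hω' i j
      simpa [gsign, Ne.symm hji] using this
    have hsum : ∑ j ∈ Finset.univ.erase i,
        |(N:ℝ)⁻¹ * ∑ k, Real.sign (Sk k ω i) * Sk k ω j| ≤ (n:ℝ) * t := by
      calc ∑ j ∈ Finset.univ.erase i, |(N:ℝ)⁻¹ * ∑ k, Real.sign (Sk k ω i) * Sk k ω j|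
          ≤ ∑ _j ∈ Finset.univ.erase i, t := Finset.sum_le_sum hoff
      _ = ((Finset.univ.erase i).card : ℝ) * t := by
            rw [Finset.sum_const, nsmul_eq_mul]
      _ ≤ (n:ℝ) * t := by
            refine mul_le_mul_of_nonneg_right ?_ ht0.le
            have : (Finset.univ.erase i).card ≤ n := by
              calc (Finset.univ.erase i).card ≤ Finset.univ.card :=
                    Finset.card_le_card (Finset.erase_subset _ _)
              _ = n := by simp
            exact_mod_cast this
    have h1 : 1 - t ≤ (N:ℝ)⁻¹ * ∑ k, |Sk k ω i| := by
      have := abs_le.1 hdiag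
      linarith [this.1]
    have hnt : ((n:ℝ)+1)*t ≤ ε' := by
      rw [htdef, show ((n:ℝ)+1)*(ε'/(2*(n:ℝ))) = (((n:ℝ)+1)*ε')/(2*(n:ℝ)) by ring,
        div_le_iff₀ (by positivity : (0:ℝ) < 2*(n:ℝ))]
      nlinarith
    linarith
  rw [tsub_le_iff_right]
  have hcover : (Set.univ : Set Ω) ⊆
      {ω | (1 - ε') • {x : EuclideanSpace ℝ (Fin n) | ∑ i, |x i| ≤ 1} ⊆
          centroidBody (empiricalMeasure fun k => Sk k ω)} ∪ (⋃ i, ⋃ j, B i j) := by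
    intro ω _
    by_cases h : ω ∈ ⋃ i, ⋃ j, B i j
    · exact Or.inr h
    · exact Or.inl (hGood h)
  calc (1:ℝ≥0∞) = ℙ (Set.univ : Set Ω) := measure_univ.symm
  _ ≤ ℙ ({ω | (1 - ε') • {x : EuclideanSpace ℝ (Fin n) | ∑ i, |x i| ≤ 1} ⊆
        centroidBody (empiricalMeasure fun k => Sk k ω)} ∪ (⋃ i, ⋃ j, B i j)) :=
      measure_mono hcover
  _ ≤ ℙ {ω | (1 - ε') • {x : EuclideanSpace ℝ (Fin n) | ∑ i, |x i| ≤ 1} ⊆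
        centroidBody (empiricalMeasure fun k => Sk k ω)} + ℙ (⋃ i, ⋃ j, B i j) :=
      measure_union_le _ _
  _ ≤ ℙ {ω | (1 - ε') • {x : EuclideanSpace ℝ (Fin n) | ∑ i, |x i| ≤ 1} ⊆
        centroidBody (empiricalMeasure fun k => Sk k ω)} + ENNReal.ofReal δ' :=
      add_le_add le_rfl hUnion
end

section
/- Let X = AS be an ICA model in ℝⁿ where each Sᵢ is symmetrically distributed with E|Sᵢ| = 1 and E(|Sᵢ|^{1+γ}) ≤ M < ∞ (M > 1, γ ∈ (0,1)), and let s_M ≥ σ_max(A). Let q ∈ ℝⁿ with q ∉ (ΓX)_ε for some ε ∈ (0,1), let x⁽¹⁾,…,x⁽ᴺ⁾ be i.i.d. samples of X, and let Y be uniformly distributed on the sample. If N ≥ max{ (8 M n s_M^{1+γ} / (ε² δ))^{3/γ}, (8 M n s_M^{1+γ} / ε)^{1/2 + 1/γ} }, then with probability at least 1 − δ over the sample, q ∉ ΓY. -/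
open MeasureTheory ProbabilityTheory Matrix
open scoped RealInnerProductSpace ENNReal

section Helpers

lemma sum_rpow_le_card_rpow_mul {n : ℕ} (hn : 1 ≤ n) (a : Fin n → ℝ) (ha : ∀ i, 0 ≤ a i)
    (p : ℝ) (hp : 1 ≤ p) :
    (∑ i, a i) ^ p ≤ (n : ℝ) ^ (p - 1) * ∑ i, a i ^ p := by
  have hn0 : (0:ℝ) < n := by exact_mod_cast hn
  have key := Real.rpow_arith_mean_le_arith_mean_rpow Finset.univ (fun _ : Fin n => (n:ℝ)⁻¹) a
    (fun i _ => by positivity) (by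
      rw [Finset.sum_const, Finset.card_univ, Fintype.card_fin, nsmul_eq_mul]
      field_simp)
    (fun i _ => ha i) hp
  have e1 : ∑ i, (n:ℝ)⁻¹ * a i = (n:ℝ)⁻¹ * ∑ i, a i := by rw [Finset.mul_sum]
  rw [e1] at key
  have hsum : 0 ≤ ∑ i, a i := Finset.sum_nonneg (fun i _ => ha i)
  rw [Real.mul_rpow (by positivity) hsum] at key
  have e2 : ∑ i, (n:ℝ)⁻¹ * a i ^ p = (n:ℝ)⁻¹ * ∑ i, a i ^ p := by rw [Finset.mul_sum]
  rw [e2] at key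
  rw [Real.inv_rpow hn0.le] at key
  have hNp : (0:ℝ) < (n:ℝ) ^ p := Real.rpow_pos_of_pos hn0 p
  rw [inv_mul_le_iff₀ hNp] at key
  calc (∑ i, a i) ^ p ≤ (n:ℝ) ^ p * ((n:ℝ)⁻¹ * ∑ i, a i ^ p) := key
    _ = (n : ℝ) ^ (p - 1) * ∑ i, a i ^ p := by
        rw [← mul_assoc]
        congr 1
        rw [← Real.rpow_neg_one, ← Real.rpow_add hn0]
        ring_nf

lemma numeric_bounds (γ ε δ B₀ : ℝ) (N : ℕ) (hγ0 : 0 < γ) (hγ1 : γ < 1)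
    (hε0 : 0 < ε) (hε1 : ε < 1) (hδ0 : 0 < δ) (hδ1 : δ < 1) (hB₀ : 0 < B₀)
    (hN : (8 * B₀ / (ε ^ 2 * δ)) ^ (3 / γ) ≤ (N : ℝ)) {R : ℝ}
    (hR : R = (2 * N * B₀ / δ) ^ (1 / (1 + γ))) :
    0 < (N : ℝ) ∧ 0 < R ∧ (N : ℝ) * (B₀ / R ^ (1 + γ)) ≤ δ / 2 ∧
      ∀ B : ℝ, 0 ≤ B → B ≤ B₀ → R ^ (1 - γ) * B ≤ (N : ℝ) * ε ^ 2 * (δ / 2) := by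
  have h1γ : (0:ℝ) < 1 + γ := by linarith
  set t : ℝ := 8 * B₀ / (ε ^ 2 * δ) with ht
  have ht0 : 0 < t := by positivity
  have hN0 : (0:ℝ) < N := lt_of_lt_of_le (Real.rpow_pos_of_pos ht0 _) hN
  have hN1 : (1:ℝ) ≤ N := by
    have : N ≠ 0 := by exact_mod_cast hN0.ne'
    exact_mod_cast Nat.one_le_iff_ne_zero.mpr this
  set P : ℝ := 2 * B₀ / δ with hP
  have hP0 : 0 < P := by positivity
  have hNP : (2 : ℝ) * N * B₀ / δ = N * P := by rw [hP]; ring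
  rw [hNP] at hR
  have hR0 : 0 < R := by rw [hR]; positivity
  have hRP : R ^ (1 + γ) = (N:ℝ) * P := by
    rw [hR, ← Real.rpow_mul (by positivity)]
    rw [one_div, inv_mul_cancel₀ h1γ.ne', Real.rpow_one]
  have hC1 : (N : ℝ) * (B₀ / R ^ (1 + γ)) = δ / 2 := by
    rw [hRP, hP]
    field_simp
  refine ⟨hN0, hR0, le_of_eq hC1, ?_⟩
  have hkey : t ≤ (N:ℝ) ^ γ := by
    rcases le_or_gt t 1 with hle | hlt
    · exact le_trans hle (Real.one_le_rpow hN1 hγ0.le)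
    · have e1 : t ^ (1/γ) ≤ t ^ (3/γ) :=
        Real.rpow_le_rpow_of_exponent_le hlt.le (by
          rw [div_le_div_iff₀ hγ0 hγ0]; nlinarith)
      have e2 : t ^ (1/γ) ≤ (N:ℝ) := le_trans e1 hN
      have e3 := Real.rpow_le_rpow (Real.rpow_nonneg ht0.le _) e2 hγ0.le
      rwa [← Real.rpow_mul ht0.le, one_div, inv_mul_cancel₀ hγ0.ne', Real.rpow_one] at e3
  have hε2 : ε ^ 2 ≤ ε ^ (1 + γ) := by
    have := Real.rpow_le_rpow_of_exponent_ge hε0 hε1.le (by linarith : 1 + γ ≤ (2:ℝ))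
    rwa [Real.rpow_two] at this
  have hεp0 : 0 < ε ^ (1 + γ) := Real.rpow_pos_of_pos hε0 _
  have hkey2 : P ≤ (N:ℝ) ^ γ * ε ^ (1 + γ) := by
    have k1 : t * ε ^ 2 = 8 * B₀ / δ := by rw [ht]; field_simp
    have k2 : P ≤ t * ε ^ 2 := by
      rw [k1, hP, div_le_div_iff₀ hδ0 hδ0]
      nlinarith
    calc P ≤ t * ε ^ 2 := k2
      _ ≤ t * ε ^ (1 + γ) := by gcongr
      _ ≤ (N:ℝ) ^ γ * ε ^ (1 + γ) := by gcongr
  intro B hB0 hBB₀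
  set a : ℝ := (1 - γ) / (1 + γ) with ha
  have hRexp : R ^ (1 - γ) = ((N:ℝ) * P) ^ a := by
    have e : 1 / (1 + γ) * (1 - γ) = a := by rw [ha]; ring
    rw [hR, ← Real.rpow_mul (by positivity), e]
  have hB₀P : B₀ = P * δ / 2 := by rw [hP]; field_simp
  have hstep : ((N:ℝ) * P) ^ a * P ≤ (N:ℝ) * ε ^ 2 := by
    have a1 : P ^ (2/(1+γ)) ≤ ((N:ℝ) ^ γ * ε ^ (1 + γ)) ^ (2/(1+γ)) :=
      Real.rpow_le_rpow hP0.le hkey2 (by positivity)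
    have a2 : ((N:ℝ) ^ γ * ε ^ (1 + γ)) ^ (2/(1+γ))
        = (N:ℝ) ^ (2*γ/(1+γ)) * ε ^ 2 := by
      rw [Real.mul_rpow (by positivity) hεp0.le, ← Real.rpow_mul (by positivity),
        ← Real.rpow_mul hε0.le]
      have e1 : γ * (2/(1+γ)) = 2*γ/(1+γ) := by ring
      have e2 : (1 + γ) * (2/(1+γ)) = 2 := by field_simp
      rw [e1, e2, Real.rpow_two]
    have pp : P ^ a * P = P ^ (2/(1+γ)) := by
      have e : P ^ a * P ^ (1:ℝ) = P ^ (2/(1+γ)) := by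
        rw [← Real.rpow_add hP0]
        congr 1
        rw [ha]; field_simp; ring
      simpa using e
    have a3 : ((N:ℝ) * P) ^ a * P = (N:ℝ) ^ a * P ^ (2/(1+γ)) := by
      rw [Real.mul_rpow (by positivity) hP0.le, mul_assoc, pp]
    have a4 : (N:ℝ) ^ a * ((N:ℝ) ^ (2*γ/(1+γ)) * ε ^ 2) = (N:ℝ) * ε ^ 2 := by
      rw [← mul_assoc, ← Real.rpow_add hN0]
      congr 2
      rw [show a + 2*γ/(1+γ) = 1 by rw [ha]; field_simp; ring, Real.rpow_one]
    calc ((N:ℝ) * P) ^ a * P = (N:ℝ) ^ a * P ^ (2/(1+γ)) := a3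
      _ ≤ (N:ℝ) ^ a * ((N:ℝ) ^ (2*γ/(1+γ)) * ε ^ 2) := by
          rw [← a2]
          exact mul_le_mul_of_nonneg_left a1 (Real.rpow_nonneg hN0.le _)
      _ = (N:ℝ) * ε ^ 2 := a4
  calc R ^ (1 - γ) * B ≤ R ^ (1 - γ) * B₀ :=
        mul_le_mul_of_nonneg_left hBB₀ (Real.rpow_nonneg hR0.le _)
    _ = ((N:ℝ) * P) ^ a * P * (δ/2) := by rw [hRexp, hB₀P]; ring
    _ ≤ (N:ℝ) * ε ^ 2 * (δ/2) :=
        mul_le_mul_of_nonneg_right hstep (by positivity)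

lemma abs_inner_le_sum {n : ℕ} (v u : EuclideanSpace ℝ (Fin n)) :
    |⟪v, u⟫| ≤ ∑ j, |u j| * |v j| := by
  have e : ⟪v, u⟫ = ∑ j, v j * u j := by
    simp [PiLp.inner_apply, RCLike.inner_apply, conj_trivial]
    exact Finset.sum_congr rfl fun j _ => mul_comm _ _
  rw [e]
  refine (Finset.abs_sum_le_sum_abs _ _).trans (le_of_eq ?_)
  refine Finset.sum_congr rfl (fun j _ => ?_)
  rw [abs_mul]; ring

lemma pointwise_moment {n : ℕ} (hn : 1 ≤ n) (w v : EuclideanSpace ℝ (Fin n)) {γ : ℝ}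
    (hγ0 : 0 < γ) (hγ1 : γ < 1) :
    |⟪v, w⟫| ^ (1 + γ) ≤ (n:ℝ) ^ γ * ∑ j, |w j| ^ (1 + γ) * |v j| ^ (1 + γ) := by
  have h1 : |⟪v, w⟫| ^ (1 + γ) ≤ (∑ j, |w j| * |v j|) ^ (1 + γ) :=
    Real.rpow_le_rpow (abs_nonneg _) (abs_inner_le_sum v w) (by linarith)
  have h2 := sum_rpow_le_card_rpow_mul hn (fun j => |w j| * |v j|)
    (fun j => by positivity) (1 + γ) (by linarith)
  have h3 : ∀ j : Fin n, (|w j| * |v j|) ^ (1 + γ) = |w j| ^ (1 + γ) * |v j| ^ (1 + γ) :=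
    fun j => Real.mul_rpow (abs_nonneg _) (abs_nonneg _)
  calc |⟪v, w⟫| ^ (1 + γ) ≤ (∑ j, |w j| * |v j|) ^ (1 + γ) := h1
    _ ≤ (n:ℝ) ^ (1 + γ - 1) * ∑ j, (|w j| * |v j|) ^ (1 + γ) := h2
    _ = (n:ℝ) ^ γ * ∑ j, |w j| ^ (1 + γ) * |v j| ^ (1 + γ) := by
        rw [show (1 + γ - 1 : ℝ) = γ by ring]
        congr 1
        exact Finset.sum_congr rfl (fun j _ => h3 j)

lemma holder_sum {n : ℕ} (hn : 1 ≤ n) (w : EuclideanSpace ℝ (Fin n)) {γ : ℝ}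
    (hγ0 : 0 < γ) (hγ1 : γ < 1) :
    ∑ j, |w j| ^ (1 + γ) ≤ (n:ℝ) ^ ((1 - γ)/2) * ‖w‖ ^ (1 + γ) := by
  have hn0 : (0:ℝ) < n := by exact_mod_cast hn
  have h1γ : (0:ℝ) < 1 + γ := by linarith
  set p : ℝ := 2 / (1 + γ) with hp
  have hp1 : 1 ≤ p := by
    rw [hp, le_div_iff₀ h1γ]; linarith
  have key := sum_rpow_le_card_rpow_mul hn (fun j => |w j| ^ (1 + γ))
    (fun j => Real.rpow_nonneg (abs_nonneg _) _) p hp1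
  have e1 : ∀ j : Fin n, (|w j| ^ (1 + γ)) ^ p = w j ^ 2 := by
    intro j
    rw [← Real.rpow_mul (abs_nonneg _), show (1 + γ) * p = 2 by rw [hp]; field_simp,
      Real.rpow_two, sq_abs]
  have hw2 : ∑ j, w j ^ 2 = ‖w‖ ^ 2 := by
    have hnorm : ‖w‖ = Real.sqrt (∑ j, ‖w j‖ ^ 2) := EuclideanSpace.norm_eq w
    have hsq : ∀ j : Fin n, ‖w j‖ ^ 2 = w j ^ 2 := fun j => by
      rw [Real.norm_eq_abs, sq_abs]
    rw [hnorm, Real.sq_sqrt (Finset.sum_nonneg fun j _ => sq_nonneg _)]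
    exact Finset.sum_congr rfl fun j _ => (hsq j).symm
  simp only at key
  have key2 : (∑ j, |w j| ^ (1 + γ)) ^ p ≤ (n:ℝ) ^ (p - 1) * ‖w‖ ^ 2 := by
    calc (∑ j, |w j| ^ (1 + γ)) ^ p ≤ (n:ℝ) ^ (p - 1) * ∑ j, (|w j| ^ (1 + γ)) ^ p := key
      _ = (n:ℝ) ^ (p - 1) * ‖w‖ ^ 2 := by
          rw [Finset.sum_congr rfl fun j _ => e1 j, hw2]
  set Ssum : ℝ := ∑ j, |w j| ^ (1 + γ) with hS
  have hS0 : 0 ≤ Ssum := Finset.sum_nonneg fun j _ => Real.rpow_nonneg (abs_nonneg _) _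
  have hp0 : 0 < p := lt_of_lt_of_le one_pos hp1
  have step := Real.rpow_le_rpow (Real.rpow_nonneg hS0 p) key2
    (le_of_lt (by positivity : (0:ℝ) < 1/p))
  rw [← Real.rpow_mul hS0, mul_one_div, div_self hp0.ne', Real.rpow_one] at step
  refine le_trans step (le_of_eq ?_)
  rw [Real.mul_rpow (Real.rpow_nonneg hn0.le _) (sq_nonneg _),
    ← Real.rpow_mul hn0.le, ← Real.rpow_two, ← Real.rpow_mul (norm_nonneg _)]
  congr 1
  · congr 1
    rw [hp]; field_simp; ring
  · congr 1
    rw [hp]; field_simp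

lemma min_sq_le {z g R γ : ℝ} (hz : 0 ≤ z) (hR : 0 < R) (hγ0 : 0 < γ) (hγ1 : γ < 1)
    (hg : z ^ (1 + γ) ≤ g) : (min z R) ^ 2 ≤ R ^ (1 - γ) * g := by
  have hg0 : 0 ≤ g := le_trans (Real.rpow_nonneg hz _) hg
  have hv0 : 0 ≤ min z R := le_min hz hR.le
  rcases eq_or_lt_of_le hv0 with h0 | h0
  · rw [← h0]
    simpa using mul_nonneg (Real.rpow_nonneg hR.le (1 - γ)) hg0
  · have e : (min z R) ^ 2 = (min z R) ^ ((1 - γ) + (1 + γ) : ℝ) := by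
      rw [show ((1 - γ) + (1 + γ) : ℝ) = 2 by ring, Real.rpow_two]
    rw [e, Real.rpow_add h0]
    have b1 : (min z R) ^ (1 - γ : ℝ) ≤ R ^ (1 - γ) :=
      Real.rpow_le_rpow hv0 (min_le_right _ _) (by linarith)
    have b2 : (min z R) ^ (1 + γ : ℝ) ≤ g :=
      le_trans (Real.rpow_le_rpow hv0 (min_le_left _ _) (by linarith)) hg
    exact mul_le_mul b1 b2 (Real.rpow_nonneg hv0 _) (Real.rpow_nonneg hR.le _)

lemma integrable_dirac'' {α E : Type*} [MeasurableSpace α] [NormedAddCommGroup E]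
    {f : α → E} (hf : StronglyMeasurable f) (a : α) : Integrable f (Measure.dirac a) := by
  refine ⟨hf.aestronglyMeasurable, ?_⟩
  rw [hasFiniteIntegral_def, lintegral_dirac' a hf.enorm]
  exact enorm_lt_top

end Helpers

/-- The spectral norm (largest singular value) of a square real matrix. -/
noncomputable def spectralNorm' {n : ℕ} (M : Matrix (Fin n) (Fin n) ℝ) : ℝ :=
  ‖(Matrix.toEuclideanCLM (𝕜 := ℝ) M : EuclideanSpace ℝ (Fin n) →L[ℝ] EuclideanSpace ℝ (Fin n))‖

section MoreHelpers

lemma integral_empirical {n N : ℕ} (x : Fin N → EuclideanSpace ℝ (Fin n))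
    (f : EuclideanSpace ℝ (Fin n) → ℝ) (hf : StronglyMeasurable f) :
    ∫ y, f y ∂(empiricalMeasure x) = (N:ℝ)⁻¹ * ∑ k, f (x k) := by
  rw [empiricalMeasure, integral_smul_measure,
    integral_finset_sum_measure (fun i _ => integrable_dirac'' hf (x i))]
  simp only [integral_dirac' _ _ hf, smul_eq_mul]
  congr 1
  simp

lemma exists_sep {n : ℕ} (μ : Measure (EuclideanSpace ℝ (Fin n)))
    (hμ : ∀ u : EuclideanSpace ℝ (Fin n), Integrable (fun x => |⟪x, u⟫|) μ)
    {q : EuclideanSpace ℝ (Fin n)} {ε : ℝ} (hε : 0 < ε)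
    (hq : q ∉ Metric.cthickening ε (centroidBody μ)) :
    ∃ u : EuclideanSpace ℝ (Fin n), ‖u‖ = 1 ∧ (∫ x, |⟪x, u⟫| ∂μ) + ε ≤ ⟪q, u⟫ := by
  classical
  set h : EuclideanSpace ℝ (Fin n) → ℝ := fun u => ∫ x, |⟪x, u⟫| ∂μ with hh
  have h_nonneg : ∀ u, 0 ≤ h u := fun u => integral_nonneg (fun x => abs_nonneg _)
  have h_smul : ∀ (c : ℝ) (u : EuclideanSpace ℝ (Fin n)), h (c • u) = |c| * h u := by
    intro c u
    simp only [hh]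
    have e : ∀ x : EuclideanSpace ℝ (Fin n), |⟪x, c • u⟫| = |c| * |⟪x, u⟫| := by
      intro x; rw [real_inner_smul_right, abs_mul]
    simp_rw [e]
    exact integral_const_mul _ _
  have h_add : ∀ u v : EuclideanSpace ℝ (Fin n), h (u + v) ≤ h u + h v := by
    intro u v
    calc h (u + v) ≤ ∫ x, (|⟪x, u⟫| + |⟪x, v⟫|) ∂μ := by
          refine integral_mono (hμ _) ((hμ u).add (hμ v)) (fun x => ?_)
          rw [inner_add_right]; exact abs_add_le _ _
      _ = h u + h v := integral_add (hμ u) (hμ v)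
  set K := centroidBody μ with hK
  have hK0 : (0 : EuclideanSpace ℝ (Fin n)) ∈ K := by
    intro u; rw [inner_zero_left]; exact integral_nonneg (fun x => abs_nonneg _)
  have hKconv : Convex ℝ K := by
    intro a ha b hb s t hs ht hst u
    have e : ⟪s • a + t • b, u⟫ = s * ⟪a, u⟫ + t * ⟪b, u⟫ := by
      rw [inner_add_left, real_inner_smul_left, real_inner_smul_left]
    rw [e]
    have h1 := mul_le_mul_of_nonneg_left (ha u) hs
    have h2 := mul_le_mul_of_nonneg_left (hb u) ht
    nlinarith [h_nonneg u]
  have hKclosed : IsClosed K := by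
    have hKeq : K = ⋂ u : EuclideanSpace ℝ (Fin n), {y | ⟪y, u⟫ ≤ h u} := by
      ext y
      simp only [Set.mem_iInter, Set.mem_setOf_eq]
      exact Iff.rfl
    rw [hKeq]
    exact isClosed_iInter fun u =>
      isClosed_le (Continuous.inner continuous_id continuous_const) continuous_const
  obtain ⟨p, hpK, hpmin⟩ := exists_norm_eq_iInf_of_complete_convex ⟨0, hK0⟩
    (hKclosed.isComplete) hKconv q
  have hobtuse : ∀ w ∈ K, ⟪q - p, w - p⟫ ≤ 0 :=
    (norm_eq_iInf_iff_real_inner_le_zero hKconv hpK).mp hpmin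
  have hεd : ε < ‖q - p‖ := by
    have h1 : ¬ (Metric.infEDist q K ≤ ENNReal.ofReal ε) := by
      rw [← Metric.mem_cthickening_iff]; exact hq
    have h2 : Metric.infEDist q K ≤ edist q p := Metric.infEDist_le_edist_of_mem hpK
    have h3 : edist q p = ENNReal.ofReal ‖q - p‖ := by rw [edist_dist, dist_eq_norm]
    rw [h3] at h2
    have h4 := lt_of_lt_of_le (lt_of_not_ge h1) h2
    exact (ENNReal.ofReal_lt_ofReal_iff_of_nonneg hε.le).mp h4
  set d : ℝ := ‖q - p‖ with hd
  have hd0 : 0 < d := lt_trans hε hεd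
  have hqp : q - p ≠ 0 := fun hc => by rw [hd, hc, norm_zero] at hd0; exact lt_irrefl _ hd0
  set u₀ : EuclideanSpace ℝ (Fin n) := d⁻¹ • (q - p) with hu₀
  have hu₀ne : u₀ ≠ 0 := smul_ne_zero (inv_ne_zero hd0.ne') hqp
  have hu₀norm : ‖u₀‖ = 1 := by
    rw [hu₀, norm_smul, norm_inv, Real.norm_eq_abs, abs_of_pos hd0, ← hd, inv_mul_cancel₀ hd0.ne']
  obtain ⟨g, hg1, hg2⟩ := exists_extension_of_le_sublinear
    (LinearPMap.mkSpanSingleton u₀ (h u₀) hu₀ne) h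
    (fun c hc x => by rw [h_smul, abs_of_pos hc])
    h_add
    (by
      rintro ⟨x, hx⟩
      obtain ⟨c, rfl⟩ := Submodule.mem_span_singleton.mp hx
      have hfx : (LinearPMap.mkSpanSingleton u₀ (h u₀) hu₀ne) ⟨c • u₀, hx⟩ = c * h u₀ := by
        rw [LinearPMap.mkSpanSingleton'_apply]; rfl
      rw [hfx]
      calc c * h u₀ ≤ |c| * h u₀ :=
            mul_le_mul_of_nonneg_right (le_abs_self c) (h_nonneg u₀)
        _ = h (c • u₀) := (h_smul c u₀).symm)
  have hgu₀ : g u₀ = h u₀ := by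
    have := hg1 ⟨u₀, Submodule.mem_span_singleton_self u₀⟩
    rw [this, LinearPMap.mkSpanSingleton_apply]
  set y : EuclideanSpace ℝ (Fin n) :=
    (InnerProductSpace.toDual ℝ (EuclideanSpace ℝ (Fin n))).symm
      (LinearMap.toContinuousLinearMap g) with hy
  have hyv : ∀ v : EuclideanSpace ℝ (Fin n), ⟪y, v⟫ = g v := by
    intro v
    rw [hy, InnerProductSpace.toDual_symm_apply]
    rfl
  have hyK : y ∈ K := fun v => by rw [hyv v]; exact hg2 v
  refine ⟨u₀, hu₀norm, ?_⟩
  have h1 : ⟪u₀, y - p⟫ ≤ 0 := by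
    rw [hu₀, real_inner_smul_left]
    exact mul_nonpos_of_nonneg_of_nonpos (inv_nonneg.mpr hd0.le) (hobtuse y hyK)
  have h2 : ⟪u₀, q - p⟫ = d := by
    rw [hu₀, real_inner_smul_left, real_inner_self_eq_norm_sq, ← hd]
    field_simp
  have h3 : h u₀ = ⟪u₀, y⟫ := by rw [real_inner_comm, hyv, hgu₀]
  have h4 : ⟪u₀, y⟫ ≤ ⟪u₀, p⟫ := by
    have h1' := h1; rw [inner_sub_right] at h1'; linarith
  have h5 : ⟪u₀, p⟫ = ⟪u₀, q⟫ - d := by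
    rw [← h2, inner_sub_right]; ring
  have h6 : ⟪q, u₀⟫ = ⟪u₀, q⟫ := real_inner_comm u₀ q
  show h u₀ + ε ≤ ⟪q, u₀⟫
  rw [h6, h3]
  linarith

end MoreHelpers

set_option maxHeartbeats 4000000 in
/-- soundness of the empirical membership oracle for points outside
`(ΓX)_ε`.  In an ICA model `X = AS` with symmetric components, `E|Sᵢ| = 1`, `(1+γ)`-moments
bounded by `M`, and `σ_max(A) ≤ s_M`, if `q ∉ (ΓX)_ε` and `Y` is uniform on
`N ≥ max{(8Mns_M^{1+γ}/(ε²δ))^{3/γ}, (8Mns_M^{1+γ}/ε)^{1/2+1/γ}}` i.i.d. samples of `X`, then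
`q ∉ ΓY` with probability at least `1 − δ`. -/
theorem empirical_centroid_oracle_no_case
    {n : ℕ} {Ω : Type*} [MeasureSpace Ω] [IsProbabilityMeasure (ℙ : Measure Ω)]
    (γ M s_M : ℝ) (hγ : γ ∈ Set.Ioo (0 : ℝ) 1) (hM : 1 < M)
    (S : Ω → EuclideanSpace ℝ (Fin n)) (hS : Measurable S)
    (hindep : iIndepFun (fun i ω => S ω i) ℙ)
    (hsym : ∀ i, Measure.map (fun ω => S ω i) ℙ = Measure.map (fun ω => -S ω i) ℙ)
    (hint : ∀ i, Integrable (fun ω => |S ω i|) ℙ)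
    (hnorm : ∀ i, ∫ ω, |S ω i| = 1)
    (hintmom : ∀ i, Integrable (fun ω => |S ω i| ^ (1 + γ)) ℙ)
    (hmom : ∀ i, ∫ ω, |S ω i| ^ (1 + γ) ≤ M)
    (A : Matrix (Fin n) (Fin n) ℝ) (hA : IsUnit A) (hsM : spectralNorm' A ≤ s_M)
    (X : Ω → EuclideanSpace ℝ (Fin n))
    (hX : X = fun ω => Matrix.toEuclideanLin A (S ω))
    (q : EuclideanSpace ℝ (Fin n)) (ε δ : ℝ)
    (hε : ε ∈ Set.Ioo (0 : ℝ) 1) (hδ : δ ∈ Set.Ioo (0 : ℝ) 1)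
    (hq : q ∉ Metric.cthickening ε (centroidBody (Measure.map X ℙ)))
    (N : ℕ) (s : Fin N → Ω → EuclideanSpace ℝ (Fin n))
    (hs : ∀ k, Measurable (s k))
    (hiid : iIndepFun s ℙ)
    (hident : ∀ k, IdentDistrib (s k) S ℙ ℙ)
    (hN : max ((8 * M * n * s_M ^ (1 + γ) / (ε ^ 2 * δ)) ^ (3 / γ))
            ((8 * M * n * s_M ^ (1 + γ) / ε) ^ ((1 : ℝ) / 2 + 1 / γ)) ≤ (N : ℝ)) :
    1 - ENNReal.ofReal δ ≤
      ℙ {ω | q ∉ centroidBody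
          (empiricalMeasure fun k => Matrix.toEuclideanLin A (s k ω))} := by
  obtain ⟨hγ0, hγ1⟩ := hγ
  obtain ⟨hε0, hε1⟩ := hε
  obtain ⟨hδ0, hδ1⟩ := hδ
  -- the degenerate case n = 0 contradicts hq
  rcases Nat.eq_zero_or_pos n with hn0 | hn
  · exfalso
    apply hq
    apply Metric.self_subset_cthickening
    intro u
    subst hn0
    have e : ⟪q, u⟫ = (0:ℝ) := by
      simp [PiLp.inner_apply]
    rw [e]
    exact integral_nonneg fun x => abs_nonneg _
  
  -- Notations and basic facts
  have hn0R : (0:ℝ) < n := by exact_mod_cast hn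
  have hn1R : (1:ℝ) ≤ n := by exact_mod_cast hn
  set μX := Measure.map X ℙ with hμX
  have hXmeas : Measurable X := by
    rw [hX]
    exact (LinearMap.continuous_of_finiteDimensional
      (Matrix.toEuclideanLin A)).measurable.comp hS
  have adj : ∀ x y : EuclideanSpace ℝ (Fin n),
      ⟪Matrix.toEuclideanLin A x, y⟫ = ⟪x, Matrix.toEuclideanLin Aᴴ y⟫ := by
    intro x y
    rw [Matrix.toEuclideanLin_conjTranspose_eq_adjoint, LinearMap.adjoint_inner_right]
  have habscont : ∀ u : EuclideanSpace ℝ (Fin n),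
      Continuous (fun v : EuclideanSpace ℝ (Fin n) => |⟪v, u⟫|) := fun u =>
    continuous_abs.comp (continuous_id.inner continuous_const)
  have hSint : ∀ u : EuclideanSpace ℝ (Fin n), Integrable (fun ω => |⟪S ω, u⟫|) ℙ := by
    intro u
    refine Integrable.mono' (g := fun ω => ∑ j, |u j| * |S ω j|) ?_
      (((habscont u).measurable.comp hS).aestronglyMeasurable) ?_
    · exact integrable_finset_sum _ (fun j _ => (hint j).const_mul _)
    · exact Filter.Eventually.of_forall fun ω => by
        rw [Real.norm_eq_abs, abs_abs]
        exact abs_inner_le_sum (S ω) u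
  have hμint : ∀ u : EuclideanSpace ℝ (Fin n), Integrable (fun x => |⟪x, u⟫|) μX := by
    intro u
    rw [hμX, integrable_map_measure ((habscont u).aestronglyMeasurable)
      hXmeas.aemeasurable]
    have e : (fun x => |⟪x, u⟫|) ∘ X = fun ω => |⟪S ω, Matrix.toEuclideanLin Aᴴ u⟫| := by
      funext ω
      simp only [Function.comp_apply, hX]
      rw [adj]
    rw [e]
    exact hSint _
  obtain ⟨u, hu1, husep⟩ := exists_sep μX hμint hε0 hq
  set w : EuclideanSpace ℝ (Fin n) := Matrix.toEuclideanLin Aᴴ u with hw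
  have hCLM : ∀ v, (Matrix.toEuclideanCLM (𝕜 := ℝ) A) v = Matrix.toEuclideanLin A v := by
    intro v
    rw [← Matrix.coe_toEuclideanCLM_eq_toEuclideanLin]
    rfl
  have hsMpos : 0 < s_M := by
    obtain ⟨U, hU⟩ := hA
    have hinv : A * ((U⁻¹ : (Matrix (Fin n) (Fin n) ℝ)ˣ) : Matrix (Fin n) (Fin n) ℝ) = 1 := by
      rw [← hU]
      exact_mod_cast U.mul_inv
    have h1 : (Matrix.toEuclideanCLM (𝕜 := ℝ) A) *
        (Matrix.toEuclideanCLM (𝕜 := ℝ) ((U⁻¹ : (Matrix (Fin n) (Fin n) ℝ)ˣ) : Matrix (Fin n) (Fin n) ℝ)) = 1 := by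
      rw [← _root_.map_mul, hinv, _root_.map_one]
    have hne : (Matrix.toEuclideanCLM (𝕜 := ℝ) A) ≠ 0 := by
      intro h0
      have h2 := congrArg (fun T : EuclideanSpace ℝ (Fin n) →L[ℝ] EuclideanSpace ℝ (Fin n) =>
        T (EuclideanSpace.single ⟨0, hn⟩ (1:ℝ))) h1
      simp only [ContinuousLinearMap.mul_apply, ContinuousLinearMap.one_apply, h0,
        ContinuousLinearMap.zero_apply] at h2
      have h3 := congrArg (fun v : EuclideanSpace ℝ (Fin n) => v ⟨0, hn⟩) h2
      simp [EuclideanSpace.single_apply] at h3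
    have : 0 < spectralNorm' A := by
      rw [spectralNorm']
      exact norm_pos_iff.mpr hne
    linarith [hsM]
  have hwnorm : ‖w‖ ≤ s_M := by
    have hins : ⟪w, w⟫ = ⟪Matrix.toEuclideanLin A w, u⟫ := by rw [adj, hw]
    have h1 : ‖w‖ ^ 2 ≤ s_M * ‖w‖ := by
      have e1 : ‖w‖ ^ 2 = ⟪w, w⟫ := (real_inner_self_eq_norm_sq w).symm
      have e2 : ⟪Matrix.toEuclideanLin A w, u⟫ ≤ ‖Matrix.toEuclideanLin A w‖ * ‖u‖ :=
        real_inner_le_norm _ _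
      have e3 : ‖Matrix.toEuclideanLin A w‖ ≤ spectralNorm' A * ‖w‖ := by
        rw [← hCLM]
        exact (Matrix.toEuclideanCLM (𝕜 := ℝ) A).le_opNorm w
      have e4 : spectralNorm' A * ‖w‖ ≤ s_M * ‖w‖ :=
        mul_le_mul_of_nonneg_right hsM (norm_nonneg _)
      rw [e1, hins]
      calc ⟪Matrix.toEuclideanLin A w, u⟫ ≤ ‖Matrix.toEuclideanLin A w‖ * ‖u‖ := e2
        _ = ‖Matrix.toEuclideanLin A w‖ := by rw [hu1, mul_one]
        _ ≤ s_M * ‖w‖ := le_trans e3 e4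
    rcases eq_or_lt_of_le (norm_nonneg w) with h0 | h0
    · rw [← h0]; exact hsMpos.le
    · nlinarith
  -- constants
  set B₀ : ℝ := M * n * s_M ^ (1 + γ) with hB₀
  have hB₀0 : 0 < B₀ := by
    rw [hB₀]
    have := Real.rpow_pos_of_pos hsMpos (1 + γ)
    positivity
  have hNmax : (8 * B₀ / (ε ^ 2 * δ)) ^ (3 / γ) ≤ (N:ℝ) := by
    refine le_trans (le_of_eq ?_) (le_trans (le_max_left _ _) hN)
    rw [hB₀]
    ring_nf
  set R : ℝ := (2 * N * B₀ / δ) ^ (1 / (1 + γ)) with hR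
  obtain ⟨hN0, hR0, hC1, hC2⟩ := numeric_bounds γ ε δ B₀ N hγ0 hγ1 hε0 hε1 hδ0 hδ1 hB₀0 hNmax hR
  have hRpow_pos : 0 < R ^ (1 + γ) := Real.rpow_pos_of_pos hR0 _
  -- random variables
  set φ : EuclideanSpace ℝ (Fin n) → ℝ := fun v => |⟪v, w⟫| with hφ
  have hφcont : Continuous φ := habscont w
  set ψ : EuclideanSpace ℝ (Fin n) → ℝ :=
    fun v => (n:ℝ) ^ γ * ∑ j, |w j| ^ (1 + γ) * |v j| ^ (1 + γ) with hψ
  have hψmeas : Measurable ψ := by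
    apply Measurable.const_mul
    apply Finset.measurable_sum
    intro j _
    apply Measurable.const_mul
    have hc : Continuous fun v : EuclideanSpace ℝ (Fin n) => |v j| ^ (1 + γ) :=
      (Real.continuous_rpow_const (by linarith)).comp
        (continuous_abs.comp (EuclideanSpace.proj (𝕜 := ℝ) j).continuous)
    exact hc.measurable
  have hψ0 : ∀ v, 0 ≤ ψ v := fun v => by
    apply mul_nonneg (Real.rpow_nonneg hn0R.le _)
    exact Finset.sum_nonneg fun j _ =>
      mul_nonneg (Real.rpow_nonneg (abs_nonneg _) _) (Real.rpow_nonneg (abs_nonneg _) _)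
  have hψbound : ∀ v, φ v ^ (1 + γ) ≤ ψ v := fun v => pointwise_moment hn w v hγ0 hγ1
  set Z : Fin N → Ω → ℝ := fun k ω => φ (s k ω) with hZdef
  set Z₀ : Ω → ℝ := fun ω => φ (S ω) with hZ₀def
  set G : Fin N → Ω → ℝ := fun k ω => ψ (s k ω) with hGdef
  set G₀ : Ω → ℝ := fun ω => ψ (S ω) with hG₀def
  have hZmeas : ∀ k, Measurable (Z k) := fun k => hφcont.measurable.comp (hs k)
  have hZnn : ∀ k ω, 0 ≤ Z k ω := fun k ω => abs_nonneg _
  have hidZ : ∀ k, IdentDistrib (Z k) Z₀ ℙ ℙ := fun k => (hident k).comp hφcont.measurable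
  have hidG : ∀ k, IdentDistrib (G k) G₀ ℙ ℙ := fun k => (hident k).comp hψmeas
  have hZ0int : Integrable Z₀ ℙ := hSint w
  have hZint : ∀ k, Integrable (Z k) ℙ := fun k => (hidZ k).integrable_iff.mpr hZ0int
  have hG0int : Integrable G₀ ℙ := by
    apply Integrable.const_mul
    exact integrable_finset_sum _ (fun j _ => (hintmom j).const_mul _)
  have hGint : ∀ k, Integrable (G k) ℙ := fun k => (hidG k).integrable_iff.mpr hG0int
  set m : ℝ := ∫ x, |⟪x, u⟫| ∂μX with hm
  have hmZ₀ : m = ∫ ω, Z₀ ω := by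
    rw [hm, hμX, integral_map hXmeas.aemeasurable ((habscont u).aestronglyMeasurable)]
    refine integral_congr_ae (Filter.Eventually.of_forall fun ω => ?_)
    simp only [hX]
    rw [adj]
  have hZkint_eq : ∀ k, ∫ ω, Z k ω = m := fun k => by
    rw [hmZ₀]
    exact (hidZ k).integral_eq
  set b : ℝ := ∫ ω, G₀ ω with hb
  have hb0 : 0 ≤ b := integral_nonneg fun ω => hψ0 _
  have hGkint_eq : ∀ k, ∫ ω, G k ω = b := fun k => (hidG k).integral_eq
  have hbB₀ : b ≤ B₀ := by
    have e1 : b = (n:ℝ) ^ γ * ∑ j, |w j| ^ (1 + γ) * ∫ ω, |S ω j| ^ (1 + γ) := by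
      rw [hb]
      show ∫ ω, (n:ℝ) ^ γ * ∑ j, |w j| ^ (1 + γ) * |S ω j| ^ (1 + γ) = _
      rw [integral_const_mul]
      congr 1
      rw [integral_finset_sum _ (fun j _ => (hintmom j).const_mul _)]
      exact Finset.sum_congr rfl fun j _ => integral_const_mul _ _
    calc b = (n:ℝ) ^ γ * ∑ j, |w j| ^ (1 + γ) * ∫ ω, |S ω j| ^ (1 + γ) := e1
      _ ≤ (n:ℝ) ^ γ * ∑ j, |w j| ^ (1 + γ) * M := by
          apply mul_le_mul_of_nonneg_left _ (Real.rpow_nonneg hn0R.le _)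
          exact Finset.sum_le_sum fun j _ =>
            mul_le_mul_of_nonneg_left (hmom j) (Real.rpow_nonneg (abs_nonneg _) _)
      _ = (n:ℝ) ^ γ * M * ∑ j, |w j| ^ (1 + γ) := by
          rw [← Finset.sum_mul, mul_assoc, mul_comm (∑ j, |w j| ^ (1 + γ)) M]
      _ ≤ (n:ℝ) ^ γ * M * ((n:ℝ) ^ ((1 - γ)/2) * ‖w‖ ^ (1 + γ)) := by
          apply mul_le_mul_of_nonneg_left (holder_sum hn w hγ0 hγ1)
          exact mul_nonneg (Real.rpow_nonneg hn0R.le _) (by linarith)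
      _ ≤ (n:ℝ) ^ γ * M * ((n:ℝ) ^ ((1 - γ)/2) * s_M ^ (1 + γ)) := by
          apply mul_le_mul_of_nonneg_left _
            (mul_nonneg (Real.rpow_nonneg hn0R.le _) (by linarith))
          exact mul_le_mul_of_nonneg_left
            (Real.rpow_le_rpow (norm_nonneg _) hwnorm (by linarith))
            (Real.rpow_nonneg hn0R.le _)
      _ = M * (n:ℝ) ^ (γ + (1 - γ)/2) * s_M ^ (1 + γ) := by
          rw [Real.rpow_add hn0R]
          ring
      _ ≤ M * (n:ℝ) * s_M ^ (1 + γ) := by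
          have e2 : (n:ℝ) ^ (γ + (1 - γ)/2) ≤ (n:ℝ) := by
            have := Real.rpow_le_rpow_of_exponent_le hn1R
              (by linarith : γ + (1 - γ)/2 ≤ (1:ℝ))
            rwa [Real.rpow_one] at this
          have hsMp := Real.rpow_nonneg hsMpos.le (1 + γ)
          have hM0 : (0:ℝ) ≤ M := by linarith
          exact mul_le_mul_of_nonneg_right
            (mul_le_mul_of_nonneg_left e2 hM0) hsMp
      _ = B₀ := by rw [hB₀]
  -- truncated variables
  set W : Fin N → Ω → ℝ := fun k ω => min (Z k ω) R with hWdef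
  have hWmeas : ∀ k, Measurable (W k) := fun k => (hZmeas k).min measurable_const
  have hWnn : ∀ k ω, 0 ≤ W k ω := fun k ω => le_min (hZnn k ω) hR0.le
  have hWleR : ∀ k ω, W k ω ≤ R := fun k ω => min_le_right _ _
  have hWleZ : ∀ k ω, W k ω ≤ Z k ω := fun k ω => min_le_left _ _
  have hWint : ∀ k, Integrable (W k) ℙ := fun k =>
    (hZint k).mono ((hWmeas k).aestronglyMeasurable)
      (Filter.Eventually.of_forall fun ω => by
        rw [Real.norm_eq_abs, Real.norm_eq_abs, abs_of_nonneg (hWnn k ω),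
          abs_of_nonneg (hZnn k ω)]
        exact hWleZ k ω)
  have hWmem2 : ∀ k, MemLp (W k) 2 ℙ := fun k =>
    MemLp.of_bound ((hWmeas k).aestronglyMeasurable) R
      (Filter.Eventually.of_forall fun ω => by
        rw [Real.norm_eq_abs, abs_of_nonneg (hWnn k ω)]
        exact hWleR k ω)
  have hEW : ∀ k, ∫ ω, W k ω ≤ m := fun k => by
    rw [← hZkint_eq k]
    exact integral_mono (hWint k) (hZint k) (fun ω => hWleZ k ω)
  have hWindep : iIndepFun W ℙ := by
    have e : W = fun k => (fun v => min (φ v) R) ∘ s k := rfl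
    rw [e]
    exact hiid.comp _ (fun k => hφcont.measurable.min measurable_const)
  have hWsq : ∀ k, ∫ ω, (W k ω) ^ 2 ≤ R ^ (1 - γ) * b := by
    intro k
    have hpt : ∀ ω, (W k ω) ^ 2 ≤ R ^ (1 - γ) * G k ω := fun ω =>
      min_sq_le (hZnn k ω) hR0 hγ0 hγ1 (hψbound (s k ω))
    calc ∫ ω, (W k ω) ^ 2 ≤ ∫ ω, R ^ (1 - γ) * G k ω :=
          integral_mono_of_nonneg (Filter.Eventually.of_forall fun ω => sq_nonneg _)
            ((hGint k).const_mul _) (Filter.Eventually.of_forall hpt)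
      _ = R ^ (1 - γ) * b := by rw [integral_const_mul, hGkint_eq k]
  have hVar : ∀ k, variance (W k) ℙ ≤ R ^ (1 - γ) * b := by
    intro k
    refine le_trans (variance_le_expectation_sq ((hWmeas k).aestronglyMeasurable)) ?_
    have e : (∫ ω, (W k ^ 2) ω) = ∫ ω, (W k ω) ^ 2 := by
      congr 1
    rw [e]
    exact hWsq k
  set Wsum : Ω → ℝ := ∑ k, W k with hWsum
  have hWsummem : MemLp Wsum 2 ℙ := memLp_finsetSum' _ (fun k _ => hWmem2 k)
  have hVarsum : variance Wsum ℙ ≤ (N:ℝ) * (R ^ (1 - γ) * b) := by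
    rw [hWsum, IndepFun.variance_sum (fun k _ => hWmem2 k)
      (fun i _ j _ hij => hWindep.indepFun hij)]
    calc ∑ k, variance (W k) ℙ ≤ ∑ _k : Fin N, R ^ (1 - γ) * b :=
          Finset.sum_le_sum fun k _ => hVar k
      _ = (N:ℝ) * (R ^ (1 - γ) * b) := by
          rw [Finset.sum_const, Finset.card_univ, Fintype.card_fin, nsmul_eq_mul]
  have hEsum : ∫ ω, Wsum ω ≤ (N:ℝ) * m := by
    have e : ∫ ω, Wsum ω = ∑ k, ∫ ω, W k ω := by
      rw [hWsum]
      simp_rw [Finset.sum_apply]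
      exact integral_finset_sum _ (fun k _ => hWint k)
    rw [e]
    calc ∑ k, ∫ ω, W k ω ≤ ∑ _k : Fin N, m := Finset.sum_le_sum fun k _ => hEW k
      _ = (N:ℝ) * m := by
          rw [Finset.sum_const, Finset.card_univ, Fintype.card_fin, nsmul_eq_mul]
  -- Chebyshev bound
  have hcheb : ℙ {ω | (N:ℝ) * ε ≤ |Wsum ω - ∫ ω', Wsum ω'|} ≤ ENNReal.ofReal (δ/2) := by
    have h1 := meas_ge_le_variance_div_sq (μ := ℙ) hWsummem
      (by positivity : (0:ℝ) < (N:ℝ) * ε)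
    refine le_trans h1 (ENNReal.ofReal_le_ofReal ?_)
    rw [div_le_iff₀ (by positivity : (0:ℝ) < ((N:ℝ) * ε) ^ 2)]
    calc variance Wsum ℙ ≤ (N:ℝ) * (R ^ (1 - γ) * b) := hVarsum
      _ ≤ (N:ℝ) * ((N:ℝ) * ε ^ 2 * (δ/2)) := by
          exact mul_le_mul_of_nonneg_left (hC2 b hb0 hbB₀) hN0.le
      _ = δ/2 * ((N:ℝ) * ε) ^ 2 := by ring
  -- tail bound
  have htail : ∀ k, ℙ {ω | R < Z k ω} ≤ ENNReal.ofReal (b / R ^ (1 + γ)) := by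
    intro k
    have hTmeas : MeasurableSet {ω | R < Z k ω} := measurableSet_lt measurable_const (hZmeas k)
    have hfin : ℙ {ω | R < Z k ω} ≠ ⊤ := measure_ne_top _ _
    have key : (ℙ {ω | R < Z k ω}).toReal * R ^ (1 + γ) ≤ b := by
      have e1 : ∫ _ω in {ω | R < Z k ω}, R ^ (1 + γ) ∂ℙ
          = (ℙ {ω | R < Z k ω}).toReal * R ^ (1 + γ) := by
        rw [setIntegral_const, smul_eq_mul, measureReal_def]
      have e2 : ∫ _ω in {ω | R < Z k ω}, R ^ (1 + γ) ∂ℙ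
          ≤ ∫ ω in {ω | R < Z k ω}, G k ω ∂ℙ := by
        refine setIntegral_mono_on ?_ ((hGint k).integrableOn) hTmeas ?_
        · exact integrableOn_const
        · intro ω hω
          calc R ^ (1 + γ) ≤ (Z k ω) ^ (1 + γ) :=
                Real.rpow_le_rpow hR0.le (le_of_lt hω) (by linarith)
            _ ≤ G k ω := hψbound (s k ω)
      have e3 : ∫ ω in {ω | R < Z k ω}, G k ω ∂ℙ ≤ ∫ ω, G k ω :=
        setIntegral_le_integral (hGint k) (Filter.Eventually.of_forall fun ω => hψ0 _)
      rw [hGkint_eq k] at e3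
      rw [← e1]
      linarith
    have h2 : (ℙ {ω | R < Z k ω}).toReal ≤ b / R ^ (1 + γ) := by
      rw [le_div_iff₀ hRpow_pos]
      exact key
    calc ℙ {ω | R < Z k ω} = ENNReal.ofReal ((ℙ {ω | R < Z k ω}).toReal) :=
          (ENNReal.ofReal_toReal hfin).symm
      _ ≤ ENNReal.ofReal (b / R ^ (1 + γ)) := ENNReal.ofReal_le_ofReal h2
  have htailU : ℙ (⋃ k, {ω | R < Z k ω}) ≤ ENNReal.ofReal (δ/2) := by
    refine le_trans (measure_iUnion_le _) ?_
    calc ∑' k : Fin N, ℙ {ω | R < Z k ω}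
        ≤ ∑' _k : Fin N, ENNReal.ofReal (b / R ^ (1 + γ)) :=
          ENNReal.tsum_le_tsum fun k => htail k
      _ = (N : ℝ≥0∞) * ENNReal.ofReal (b / R ^ (1 + γ)) := by
          rw [tsum_fintype]
          rw [Finset.sum_const, Finset.card_univ, Fintype.card_fin, nsmul_eq_mul]
      _ = ENNReal.ofReal ((N:ℝ) * (b / R ^ (1 + γ))) := by
          rw [ENNReal.ofReal_mul (by positivity : (0:ℝ) ≤ (N:ℝ))]
          rw [ENNReal.ofReal_natCast]
      _ ≤ ENNReal.ofReal (δ/2) := by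
          apply ENNReal.ofReal_le_ofReal
          have e : (N:ℝ) * (b / R ^ (1 + γ)) ≤ (N:ℝ) * (B₀ / R ^ (1 + γ)) := by
            gcongr
          linarith [hC1]
  
  -- event inclusion and final assembly
  have hincl : {ω | q ∈ centroidBody
        (empiricalMeasure fun k => Matrix.toEuclideanLin A (s k ω))}
      ⊆ {ω | (N:ℝ) * ε ≤ |Wsum ω - ∫ ω', Wsum ω'|} ∪ (⋃ k, {ω | R < Z k ω}) := by
    intro ω hω
    by_cases hT2 : ω ∈ ⋃ k, {ω | R < Z k ω}
    · exact Or.inr hT2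
    · left
      have hZle : ∀ k, Z k ω ≤ R := by
        intro k
        by_contra hcon
        exact hT2 (Set.mem_iUnion.mpr ⟨k, lt_of_not_ge hcon⟩)
      have hWZ : ∀ k, W k ω = Z k ω := fun k => min_eq_left (hZle k)
      have hemp : ⟪q, u⟫ ≤ (N:ℝ)⁻¹ * ∑ k, Z k ω := by
        have h0 := hω u
        rw [integral_empirical _ _ ((habscont u).stronglyMeasurable)] at h0
        refine le_trans h0 (le_of_eq ?_)
        congr 1
        refine Finset.sum_congr rfl fun k _ => ?_
        rw [adj]
      have hNne : (N:ℝ) ≠ 0 := hN0.ne'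
      have hsum : (N:ℝ) * (m + ε) ≤ ∑ k, Z k ω := by
        have h1 := le_trans husep hemp
        have h2 := mul_le_mul_of_nonneg_left h1 hN0.le
        calc (N:ℝ) * (m + ε) ≤ (N:ℝ) * ((N:ℝ)⁻¹ * ∑ k, Z k ω) := h2
          _ = ∑ k, Z k ω := by field_simp
      have hWsumω : Wsum ω = ∑ k, Z k ω := by
        rw [hWsum, Finset.sum_apply]
        exact Finset.sum_congr rfl fun k _ => hWZ k
      have hfinal : (N:ℝ) * ε ≤ Wsum ω - ∫ ω', Wsum ω' := by
        have e : (N:ℝ) * (m + ε) = (N:ℝ) * m + (N:ℝ) * ε := by ring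
        rw [hWsumω]
        have := hEsum
        linarith [hsum]
      exact le_trans hfinal (le_abs_self _)
  have hbad : ℙ {ω | q ∈ centroidBody
      (empiricalMeasure fun k => Matrix.toEuclideanLin A (s k ω))} ≤ ENNReal.ofReal δ := by
    refine le_trans (measure_mono hincl) ?_
    refine le_trans (measure_union_le _ _) ?_
    refine le_trans (add_le_add hcheb htailU) ?_
    rw [← ENNReal.ofReal_add (by positivity) (by positivity)]
    apply le_of_eq
    congr 1
    ring
  have hunion : (Set.univ : Set Ω) ⊆
      {ω | q ∉ centroidBody (empiricalMeasure fun k => Matrix.toEuclideanLin A (s k ω))}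
      ∪ {ω | q ∈ centroidBody (empiricalMeasure fun k => Matrix.toEuclideanLin A (s k ω))} := by
    intro ω _
    by_cases hc : q ∈ centroidBody (empiricalMeasure fun k => Matrix.toEuclideanLin A (s k ω))
    · exact Or.inr hc
    · exact Or.inl hc
  have h1 : (1:ℝ≥0∞) ≤
      ℙ {ω | q ∉ centroidBody (empiricalMeasure fun k => Matrix.toEuclideanLin A (s k ω))}
      + ℙ {ω | q ∈ centroidBody (empiricalMeasure fun k => Matrix.toEuclideanLin A (s k ω))} := by
    calc (1:ℝ≥0∞) = ℙ (Set.univ : Set Ω) := measure_univ.symm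
      _ ≤ ℙ ({ω | q ∉ centroidBody (empiricalMeasure fun k => Matrix.toEuclideanLin A (s k ω))}
          ∪ {ω | q ∈ centroidBody (empiricalMeasure fun k => Matrix.toEuclideanLin A (s k ω))}) :=
        measure_mono hunion
      _ ≤ _ := measure_union_le _ _
  rw [tsub_le_iff_right]
  exact le_trans h1 (add_le_add_right hbad _)
end
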